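/- arXiv:2104.12251 — 5 statements merged into one kernel-verified Lean document; each statement's English description precedes it below -/
import Mathlib

section
/- Let (X,‖·‖) be a real Banach space and let S, with domain D(S) ⊆ X, generate a bounded analytic semigroup (T(t))_{t≥0} with constants M, C₀ as in the context. Then for every integer k ≥ 0 and every s ∈ (0,2) there exists a constant C = C(s,k,M,C₀) such that for all t > 0: (a) ‖tᵏSᵏ(T(t)x)‖_{Ḃˢ} ≤ C‖x‖_{Ḃˢ} for all x ∈ D(S); and (b) ‖tᵏالسᵏ(T(t)x)‖_{Ḃ⁻ˢ} ≤ C‖x‖_{Ḃ⁻ˢ} for all x in the range of S; where Sᵏ(T(t)x) is well defined because T(τ)y ∈ D(S) for all τ > 0, y ∈ X. -/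
open MeasureTheory
open scoped ENNReal NNReal

noncomputable section

variable {X : Type*} [NormedAddCommGroup X] [NormedSpace ℝ X] [CompleteSpace X]

/-- `S`, a linear operator defined on the subspace `D ⊆ X`, generates the bounded
analytic semigroup `(T(t))_{t≥0}` with constants `M, C₀`. -/
structure IsBAS (D : Set X) (S : X → X) (T : ℝ → X →L[ℝ] X) (M C₀ : ℝ) : Prop where
  zero_mem : (0 : X) ∈ D
  add_mem : ∀ x ∈ D, ∀ y ∈ D, x + y ∈ D
  smul_mem : ∀ (c : ℝ), ∀ x ∈ D, c • x ∈ D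
  map_add : ∀ x ∈ D, ∀ y ∈ D, S (x + y) = S x + S y
  map_smul : ∀ (c : ℝ), ∀ x ∈ D, S (c • x) = c • S x
  T_zero : T 0 = ContinuousLinearMap.id ℝ X
  T_semigroup : ∀ t : ℝ, 0 ≤ t → ∀ s : ℝ, 0 ≤ s → T (t + s) = (T t).comp (T s)
  T_cont : ∀ x : X, ContinuousOn (fun t : ℝ => T t x) (Set.Ici 0)
  T_bdd : ∀ t : ℝ, 0 ≤ t → ∀ x : X, ‖T t x‖ ≤ M * ‖x‖
  T_mem : ∀ x ∈ D, ∀ t : ℝ, 0 ≤ t → T t x ∈ D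
  T_comm : ∀ x ∈ D, ∀ t : ℝ, 0 ≤ t → S (T t x) = T t (S x)
  T_deriv : ∀ x ∈ D, ∀ t : ℝ, 0 ≤ t →
    HasDerivWithinAt (fun τ : ℝ => T τ x) (T t (S x)) (Set.Ici 0) t
  analytic_mem : ∀ x : X, ∀ t : ℝ, 0 < t → T t x ∈ D
  analytic_bdd : ∀ x : X, ∀ t : ℝ, 0 < t → t * ‖S (T t x)‖ ≤ C₀ * ‖x‖

/-- The (extended-real-valued) seminorm `‖x‖_{Ḃˢ} = ∫₀^∞ t^{−s/2}‖S(T(t)x)‖ dt`. -/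
def BsNorm (S : X → X) (T : ℝ → X →L[ℝ] X) (s : ℝ) (x : X) : ℝ≥0∞ :=
  ∫⁻ t in Set.Ioi (0 : ℝ), ENNReal.ofReal (t ^ (-s / 2) * ‖S (T t x)‖)

/-- The (extended-real-valued) seminorm `‖x‖_{Ḃ⁻ˢ} = ∫₀^∞ t^{s/2−1}‖T(t)x‖ dt`. -/
def BnegNorm (T : ℝ → X →L[ℝ] X) (s : ℝ) (x : X) : ℝ≥0∞ :=
  ∫⁻ t in Set.Ioi (0 : ℝ), ENNReal.ofReal (t ^ (s / 2 - 1) * ‖T t x‖)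


lemma IsBAS.key_id {D : Set X} {S : X → X} {T : ℝ → X →L[ℝ] X} {M C₀ : ℝ}
    (h : IsBAS D S T M C₀) {v ε : ℝ} (hv : 0 ≤ v) (hε : 0 < ε) (x : X) :
    S (T (v + ε) x) = T v (S (T ε x)) := by
  have h1 : T (v + ε) x = T v (T ε x) := by
    rw [h.T_semigroup v hv ε hε.le]; rfl
  rw [h1, h.T_comm (T ε x) (h.analytic_mem x ε hε) v hv]

lemma IsBAS.iter_comm {D : Set X} {S : X → X} {T : ℝ → X →L[ℝ] X} {M C₀ : ℝ}
    (h : IsBAS D S T M C₀) (k : ℕ) :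
    ∀ t : ℝ, 0 < t → ∀ u : ℝ, 0 ≤ u → ∀ x : X,
      T u (S^[k] (T t x)) = S^[k] (T (t + u) x) := by
  induction k with
  | zero =>
    intro t ht u hu x
    simp only [Function.iterate_zero, id_eq]
    rw [show t + u = u + t by ring, h.T_semigroup u hu t ht.le]; rfl
  | succ k ih =>
    intro t ht u hu x
    have ht2 : 0 < t / 2 := half_pos ht
    have e1 : S (T t x) = T (t / 2) (S (T (t / 2) x)) := by
      have := h.key_id ht2.le ht2 x
      rwa [show t / 2 + t / 2 = t by ring] at this
    have e2 : S (T (t + u) x) = T (t / 2 + u) (S (T (t / 2) x)) := by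
      have := h.key_id (v := t / 2 + u) (ε := t / 2) (by linarith) ht2 x
      rwa [show t / 2 + u + t / 2 = t + u by ring] at this
    rw [Function.iterate_succ_apply, Function.iterate_succ_apply, e1, e2]
    exact ih (t / 2) ht2 u hu (S (T (t / 2) x))

lemma IsBAS.iter_mem {D : Set X} {S : X → X} {T : ℝ → X →L[ℝ] X} {M C₀ : ℝ}
    (h : IsBAS D S T M C₀) (k : ℕ) {t : ℝ} (ht : 0 < t) (x : X) :
    S^[k] (T t x) ∈ D := by
  have ht2 : 0 < t / 2 := half_pos ht
  have := h.iter_comm k (t / 2) ht2 (t / 2) ht2.le x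
  rw [show t / 2 + t / 2 = t by ring] at this
  rw [← this]
  exact h.analytic_mem _ _ ht2

lemma iterBound (M C₀ : ℝ) (k : ℕ) :
    ∃ B : ℝ, 0 ≤ B ∧ ∀ (D : Set X) (S : X → X) (T : ℝ → X →L[ℝ] X),
      IsBAS D S T M C₀ → ∀ u : ℝ, 0 < u → ∀ z : X,
      u ^ k * ‖S^[k] (T u z)‖ ≤ B * ‖z‖ := by
  induction k with
  | zero =>
    refine ⟨max M 0, le_max_right _ _, fun D S T h u hu z => ?_⟩
    simp only [pow_zero, one_mul, Function.iterate_zero, id_eq]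
    exact (h.T_bdd u hu.le z).trans
      (mul_le_mul_of_nonneg_right (le_max_left _ _) (norm_nonneg z))
  | succ k ih =>
    obtain ⟨B, hB0, hB⟩ := ih
    refine ⟨2 ^ (k + 1) * max C₀ 0 * B, by positivity, fun D S T h u hu z => ?_⟩
    have hu2 : 0 < u / 2 := half_pos hu
    have key : S (T u z) = T (u / 2) (S (T (u / 2) z)) := by
      have := h.key_id hu2.le hu2 z
      rwa [show u / 2 + u / 2 = u by ring] at this
    set w := S (T (u / 2) z) with hw
    have h1 : (u / 2) ^ k * ‖S^[k] (T (u / 2) w)‖ ≤ B * ‖w‖ := hB D S T h (u / 2) hu2 w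
    have h2 : (u / 2) * ‖w‖ ≤ max C₀ 0 * ‖z‖ :=
      (h.analytic_bdd z (u / 2) hu2).trans
        (mul_le_mul_of_nonneg_right (le_max_left _ _) (norm_nonneg z))
    have e : u ^ (k + 1) * ‖S^[k + 1] (T u z)‖
        = 2 ^ (k + 1) * ((u / 2) * ((u / 2) ^ k * ‖S^[k] (T (u / 2) w)‖)) := by
      rw [Function.iterate_succ_apply, key]
      have : u ^ (k + 1) = 2 ^ (k + 1) * ((u / 2) * (u / 2) ^ k) := by
        rw [div_pow]; field_simp; ring
      rw [this]; ring
    rw [e]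
    calc 2 ^ (k + 1) * ((u / 2) * ((u / 2) ^ k * ‖S^[k] (T (u / 2) w)‖))
        ≤ 2 ^ (k + 1) * ((u / 2) * (B * ‖w‖)) := by gcongr
      _ = 2 ^ (k + 1) * B * ((u / 2) * ‖w‖) := by ring
      _ ≤ 2 ^ (k + 1) * B * (max C₀ 0 * ‖z‖) := by gcongr
      _ = 2 ^ (k + 1) * max C₀ 0 * B * ‖z‖ := by ring

/-- Uniform boundedness of `x ↦ tᵏSᵏT(t)x` on the spaces `Ḃˢ` and `Ḃ⁻ˢ`:
for every `k ≥ 0` and `s ∈ (0,2)` there is `C = C(s,k,M,C₀)` with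
`‖tᵏSᵏ(T(t)x)‖_{Ḃˢ} ≤ C‖x‖_{Ḃˢ}` for `x ∈ D(S)` and
`‖tᵏSᵏ(T(t)x)‖_{Ḃ⁻ˢ} ≤ C‖x‖_{Ḃ⁻ˢ}` for `x` in the range of `S`. -/
theorem uniform_bound_in_B (k : ℕ) (s : ℝ) (hs0 : 0 < s) (hs2 : s < 2)
    (M C₀ : ℝ) :
    ∃ C : ℝ≥0, ∀ (D : Set X) (S : X → X) (T : ℝ → X →L[ℝ] X),
      IsBAS D S T M C₀ →
      (∀ x ∈ D, ∀ t : ℝ, 0 < t →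
        BsNorm S T s (t ^ k • S^[k] (T t x)) ≤ C * BsNorm S T s x) ∧
      (∀ x ∈ S '' D, ∀ t : ℝ, 0 < t →
        BnegNorm T s (t ^ k • S^[k] (T t x)) ≤ C * BnegNorm T s x) := by
  obtain ⟨B, hB0, hB⟩ := iterBound (X := X) M C₀ k
  refine ⟨B.toNNReal, fun D S T h => ⟨?_, ?_⟩⟩
  · intro x hx t ht
    have hcoe : ((B.toNNReal : ℝ≥0∞)) = ENNReal.ofReal B := rfl
    unfold BsNorm
    rw [hcoe, ← lintegral_const_mul' _ _ ENNReal.ofReal_ne_top]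
    refine lintegral_mono_ae ((ae_restrict_iff' measurableSet_Ioi).2
      (Filter.Eventually.of_forall fun τ hτ => ?_))
    replace hτ : 0 < τ := hτ
    have hz : S^[k] (T (t + τ) x) ∈ D := h.iter_mem k (by linarith) x
    have e1 : T τ ((t : ℝ) ^ k • S^[k] (T t x)) = (t : ℝ) ^ k • S^[k] (T (t + τ) x) := by
      rw [_root_.map_smul, h.iter_comm k t ht τ hτ.le x]
    have e2 : S (T τ ((t : ℝ) ^ k • S^[k] (T t x)))
        = (t : ℝ) ^ k • S^[k] (T t (S (T τ x))) := by
      rw [e1, h.map_smul _ _ hz]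
      congr 1
      rw [← Function.iterate_succ_apply' S k, Function.iterate_succ_apply,
        h.key_id ht.le hτ x]
    have bound : ‖S (T τ ((t : ℝ) ^ k • S^[k] (T t x)))‖ ≤ B * ‖S (T τ x)‖ := by
      rw [e2, norm_smul, Real.norm_eq_abs, abs_of_nonneg (pow_nonneg ht.le k)]
      exact hB D S T h t ht (S (T τ x))
    rw [← ENNReal.ofReal_mul hB0]
    apply ENNReal.ofReal_le_ofReal
    have hτs : 0 ≤ τ ^ (-s / 2) := Real.rpow_nonneg hτ.le _
    calc τ ^ (-s / 2) * ‖S (T τ ((t : ℝ) ^ k • S^[k] (T t x)))‖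
        ≤ τ ^ (-s / 2) * (B * ‖S (T τ x)‖) := mul_le_mul_of_nonneg_left bound hτs
      _ = B * (τ ^ (-s / 2) * ‖S (T τ x)‖) := by ring
  · intro x hx t ht
    have hcoe : ((B.toNNReal : ℝ≥0∞)) = ENNReal.ofReal B := rfl
    unfold BnegNorm
    rw [hcoe, ← lintegral_const_mul' _ _ ENNReal.ofReal_ne_top]
    refine lintegral_mono_ae ((ae_restrict_iff' measurableSet_Ioi).2
      (Filter.Eventually.of_forall fun τ hτ => ?_))
    replace hτ : 0 < τ := hτ
    have e1 : T τ ((t : ℝ) ^ k • S^[k] (T t x)) = (t : ℝ) ^ k • S^[k] (T t (T τ x)) := by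
      rw [_root_.map_smul, h.iter_comm k t ht τ hτ.le x]
      congr 2
      rw [h.T_semigroup t ht.le τ hτ.le]; rfl
    have bound : ‖T τ ((t : ℝ) ^ k • S^[k] (T t x))‖ ≤ B * ‖T τ x‖ := by
      rw [e1, norm_smul, Real.norm_eq_abs, abs_of_nonneg (pow_nonneg ht.le k)]
      exact hB D S T h t ht (T τ x)
    rw [← ENNReal.ofReal_mul hB0]
    apply ENNReal.ofReal_le_ofReal
    have hτs : 0 ≤ τ ^ (s / 2 - 1) := Real.rpow_nonneg hτ.le _
    calc τ ^ (s / 2 - 1) * ‖T τ ((t : ℝ) ^ k • S^[k] (T t x))‖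
        ≤ τ ^ (s / 2 - 1) * (B * ‖T τ x‖) := mul_le_mul_of_nonneg_left bound hτs
      _ = B * (τ ^ (s / 2 - 1) * ‖T τ x‖) := by ring
end
end

section
/- Let (X,‖·‖) be a real Banach space and let S, with domain D(S) ⊆ X, generate a bounded analytic semigroup (T(t))_{t≥0} with constants M, C₀ as in the context. Then for every integer k ≥ 0 and every s ∈ (0,2) there exists a constant C = C(s,k,M,C₀) such that for every x ∈ D(S): ∫₀^∞ ‖τ^{k+1}S^{k+1}(T(τ)x)‖_{Ḃˢ} dτ/τ ≤ C‖x‖_{Ḃˢ}. In particular (k = 0): ∫₀^∞ ‖S(T(τ)x)‖_{Ḃˢ} dτ ≤ C‖x‖_{Ḃˢ}. -/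
open MeasureTheory
open scoped ENNReal NNReal

noncomputable section

variable {X : Type*} [NormedAddCommGroup X] [NormedSpace ℝ X] [CompleteSpace X]

set_option linter.unusedSectionVars false

section Helpers

lemma lint_shift (t : ℝ) (f : ℝ → ℝ≥0∞) :
    ∫⁻ τ in Set.Ioi (0 : ℝ), f (τ + t) = ∫⁻ σ in Set.Ioi t, f σ := by
  have hg : MeasurePreserving (fun τ : ℝ => τ + t) volume volume :=
    measurePreserving_add_right volume t
  have hemb : MeasurableEmbedding (fun τ : ℝ => τ + t) :=
    (Homeomorph.addRight t).measurableEmbedding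
  have h := hg.setLIntegral_comp_preimage_emb hemb f (Set.Ioi t)
  rwa [show (fun τ : ℝ => τ + t) ⁻¹' Set.Ioi t = Set.Ioi 0 by
    ext τ; simp [lt_add_iff_pos_left]] at h

lemma lint_scale {c : ℝ} (hc : 0 < c) (f : ℝ → ℝ≥0∞) :
    ∫⁻ σ in Set.Ioi (0 : ℝ), f σ
      = ENNReal.ofReal c * ∫⁻ r in Set.Ioi (0 : ℝ), f (c * r) := by
  have hemb : MeasurableEmbedding (fun r : ℝ => c * r) :=
    (Homeomorph.mulLeft₀ c hc.ne').measurableEmbedding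
  have h0 : (volume : Measure ℝ)
      = ENNReal.ofReal c • Measure.map (fun r : ℝ => c * r) volume := by
    conv_lhs => rw [← Real.smul_map_volume_mul_left hc.ne']
    rw [abs_of_pos hc]
  conv_lhs => rw [h0]
  rw [Measure.restrict_smul, lintegral_smul_measure,
    Measure.restrict_map (measurable_const_mul c) measurableSet_Ioi,
    hemb.lintegral_map,
    show (fun r : ℝ => c * r) ⁻¹' Set.Ioi 0 = Set.Ioi 0 by
      ext r
      simp only [Set.mem_preimage, Set.mem_Ioi]
      constructor
      · intro h
        by_contra hr
        push_neg at hr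
        nlinarith
      · exact fun h => mul_pos hc h]
  rw [smul_eq_mul]

lemma lint_rpow {s : ℝ} (hs0 : 0 < s) (hs2 : s < 2) {σ : ℝ} (hσ : 0 < σ) :
    ∫⁻ t in Set.Ioo (0 : ℝ) σ, ENNReal.ofReal (t ^ (-s / 2)) =
      ENNReal.ofReal (2 / (2 - s) * σ ^ (1 - s / 2)) := by
  have hexp : (-1 : ℝ) < -s / 2 := by linarith
  have hii : IntervalIntegrable (fun t : ℝ => t ^ (-s / 2)) volume 0 σ :=
    intervalIntegral.intervalIntegrable_rpow' hexp
  have hint : IntegrableOn (fun t : ℝ => t ^ (-s / 2)) (Set.Ioo 0 σ) :=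
    hii.1.mono_set Set.Ioo_subset_Ioc_self
  have hnn : 0 ≤ᵐ[volume.restrict (Set.Ioo (0 : ℝ) σ)] fun t : ℝ => t ^ (-s / 2) := by
    filter_upwards [ae_restrict_mem measurableSet_Ioo] with t ht
    exact (Real.rpow_pos_of_pos ht.1 _).le
  rw [← ofReal_integral_eq_lintegral_ofReal hint hnn]
  congr 1
  rw [← integral_Ioc_eq_integral_Ioo, ← intervalIntegral.integral_of_le hσ.le,
    integral_rpow (Or.inl hexp), Real.zero_rpow (by linarith : -s / 2 + 1 ≠ 0),
    show -s / 2 + 1 = 1 - s / 2 by ring]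
  rw [sub_zero]
  field_simp

lemma measurable_piecewise_of_continuousOn {f : ℝ → ℝ≥0∞}
    (hf : ContinuousOn f (Set.Ioi 0)) :
    Measurable ((Set.Ioi (0 : ℝ)).piecewise f fun _ => 0) := by
  apply measurable_of_isOpen
  intro t ht
  obtain ⟨u, u_open, hu⟩ := continuousOn_iff'.1 hf t ht
  rw [Set.piecewise_preimage, Set.ite, hu]
  exact (u_open.measurableSet.inter measurableSet_Ioi).union
    ((measurable_const ht.measurableSet).diff measurableSet_Ioi)

end Helpers

namespace IsBAS

variable {D : Set X} {S : X → X} {T : ℝ → X →L[ℝ] X} {M C₀ : ℝ}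

lemma mem_comm (h : IsBAS D S T M C₀) (x : X) (m : ℕ) :
    ∀ t : ℝ, 0 < t → S^[m] (T t x) ∈ D ∧
      ∀ u : ℝ, 0 < u → u < t → S^[m] (T t x) = T (t - u) (S^[m] (T u x)) := by
  induction m with
  | zero =>
    intro t ht
    refine ⟨h.analytic_mem x t ht, fun u hu hut => ?_⟩
    simp only [Function.iterate_zero_apply]
    conv_lhs => rw [show t = (t - u) + u by ring]
    rw [h.T_semigroup _ (by linarith) _ hu.le]
    rfl
  | succ m ih =>
    intro t ht
    have key : ∀ u : ℝ, 0 < u → u < t →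
        S^[m + 1] (T t x) = T (t - u) (S^[m + 1] (T u x)) := by
      intro u hu hut
      rw [Function.iterate_succ_apply', Function.iterate_succ_apply',
        (ih t ht).2 u hu hut, h.T_comm _ (ih u hu).1 _ (by linarith)]
    refine ⟨?_, key⟩
    rw [key (t / 2) (by linarith) (by linarith)]
    exact h.analytic_mem _ _ (by linarith)

lemma bdd' (h : IsBAS D S T M C₀) (y : X) (t : ℝ) (ht : 0 < t) :
    ‖S (T t y)‖ ≤ max C₀ 0 / t * ‖y‖ := by
  have h1 := h.analytic_bdd y t ht
  have h2 : C₀ * ‖y‖ ≤ max C₀ 0 * ‖y‖ :=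
    mul_le_mul_of_nonneg_right (le_max_left _ _) (norm_nonneg _)
  rw [div_mul_eq_mul_div, le_div_iff₀ ht, mul_comm]
  linarith

lemma iter_bound (h : IsBAS D S T M C₀) (x : X) :
    ∀ m : ℕ, ∀ t : ℝ, 0 < t →
      ‖S^[m + 1] (T t x)‖ ≤
        (((m : ℝ) + 1) * max C₀ 0 / t) ^ m * ‖S (T (t / ((m : ℝ) + 1)) x)‖ := by
  intro m
  induction m with
  | zero => intro t ht; simp
  | succ m ih =>
    intro t ht
    have hc0 : (0 : ℝ) < (m : ℝ) + 2 := by positivity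
    have hdiv : 0 < t / ((m : ℝ) + 2) := div_pos ht hc0
    have hu0 : 0 < t - t / ((m : ℝ) + 2) := by
      have : t / ((m : ℝ) + 2) < t := div_lt_self ht (by linarith [Nat.cast_nonneg (α := ℝ) m])
      linarith
    have h1 := (h.mem_comm x (m + 1) t ht).2 (t - t / ((m : ℝ) + 2)) hu0 (by linarith)
    have e1 : t - (t - t / ((m : ℝ) + 2)) = t / ((m : ℝ) + 2) := by ring
    rw [e1] at h1
    have e2 : (t - t / ((m : ℝ) + 2)) / ((m : ℝ) + 1) = t / ((m : ℝ) + 2) := by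
      field_simp
      ring
    have e3 : ((m : ℝ) + 1) * max C₀ 0 / (t - t / ((m : ℝ) + 2)) =
        ((m : ℝ) + 2) * max C₀ 0 / t := by
      rw [div_eq_div_iff (by linarith) (by linarith)]
      field_simp
      ring
    calc ‖S^[m + 1 + 1] (T t x)‖
        = ‖S (T (t / ((m : ℝ) + 2)) (S^[m + 1] (T (t - t / ((m : ℝ) + 2)) x)))‖ := by
          rw [Function.iterate_succ_apply', h1]
      _ ≤ max C₀ 0 / (t / ((m : ℝ) + 2)) * ‖S^[m + 1] (T (t - t / ((m : ℝ) + 2)) x)‖ :=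
          h.bdd' _ _ hdiv
      _ ≤ max C₀ 0 / (t / ((m : ℝ) + 2)) *
          ((((m : ℝ) + 1) * max C₀ 0 / (t - t / ((m : ℝ) + 2))) ^ m *
            ‖S (T ((t - t / ((m : ℝ) + 2)) / ((m : ℝ) + 1)) x)‖) :=
          mul_le_mul_of_nonneg_left (ih _ hu0) (by positivity)
      _ = ((↑(m + 1) + 1) * max C₀ 0 / t) ^ (m + 1) * ‖S (T (t / (↑(m + 1) + 1)) x)‖ := by
          rw [e2, e3]
          have e4 : ((m + 1 : ℕ) : ℝ) + 1 = (m : ℝ) + 2 := by push_cast; ring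
          rw [e4, pow_succ]
          have e5 : max C₀ 0 / (t / ((m : ℝ) + 2)) = ((m : ℝ) + 2) * max C₀ 0 / t := by
            field_simp
          rw [e5]
          ring

lemma cont (h : IsBAS D S T M C₀) (x : X) (m : ℕ) :
    ContinuousOn (fun t : ℝ => S^[m + 1] (T t x)) (Set.Ioi 0) := by
  intro t ht
  have ht' : (0 : ℝ) < t := ht
  have hu : (0 : ℝ) < t / 2 := by linarith
  have hmem : Set.Ioi (t / 2) ∈ nhds t :=
    isOpen_Ioi.mem_nhds (by simp only [Set.mem_Ioi]; linarith)
  have hev : ∀ᶠ r in nhds t, S^[m + 1] (T r x) = T (r - t / 2) (S^[m + 1] (T (t / 2) x)) := by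
    filter_upwards [hmem] with r hr
    exact (h.mem_comm x (m + 1) r (lt_trans hu hr)).2 (t / 2) hu hr
  have h1 : ContinuousAt (fun u : ℝ => T u (S^[m + 1] (T (t / 2) x))) (t - t / 2) :=
    (h.T_cont _).continuousAt (Ici_mem_nhds (by linarith))
  have h2 : ContinuousAt (fun r : ℝ => r - t / 2) t :=
    (continuous_id.sub continuous_const).continuousAt
  have hc : ContinuousAt (fun r : ℝ => T (r - t / 2) (S^[m + 1] (T (t / 2) x))) t :=
    ContinuousAt.comp (g := fun u : ℝ => T u (S^[m + 1] (T (t / 2) x)))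
      (f := fun r : ℝ => r - t / 2) (x := t) h1 h2
  exact (hc.congr (hev.mono fun r hr => hr.symm)).continuousWithinAt

lemma inner_eq (h : IsBAS D S T M C₀) (x : X) (j : ℕ) {τ t : ℝ} (hτ : 0 < τ) (ht : 0 < t) :
    S (T t (S^[j + 1] (T τ x))) = S^[j + 2] (T (t + τ) x) := by
  have h3 := (h.mem_comm x (j + 1) (t + τ) (by linarith)).2 τ hτ (by linarith)
  rw [show t + τ - τ = t by ring] at h3
  have h4 : S^[j + 2] (T (t + τ) x) = S (S^[j + 1] (T (t + τ) x)) :=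
    Function.iterate_succ_apply' S (j + 1) _
  rw [h4, h3]

lemma key_bound (h : IsBAS D S T M C₀) {s : ℝ} (hs0 : 0 < s) (hs2 : s < 2)
    (k : ℕ) (x : X) :
    (∫⁻ τ in Set.Ioi (0 : ℝ), ∫⁻ t in Set.Ioi (0 : ℝ),
        ENNReal.ofReal (t ^ (-s / 2) * (τ ^ k * ‖S^[k + 2] (T (t + τ) x)‖)))
      ≤ ENNReal.ofReal ((((k : ℝ) + 2) * max C₀ 0) ^ (k + 1) * (2 / (2 - s)) *
          (((k : ℝ) + 2) * ((k : ℝ) + 2) ^ (-s / 2))) * BsNorm S T s x := by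
  have hc2 : (0 : ℝ) < (k : ℝ) + 2 := by positivity
  set c2 : ℝ := (k : ℝ) + 2 with hc2def
  set A : ℝ := (c2 * max C₀ 0) ^ (k + 1) with hAdef
  have hA : 0 ≤ A := by positivity
  set F : ℝ → ℝ≥0∞ :=
    (Set.Ioi (0 : ℝ)).piecewise
      (fun σ => ENNReal.ofReal (σ⁻¹ * ‖S (T (σ / c2) x)‖)) (fun _ => 0) with hFdef
  have hFcont : ContinuousOn
      (fun σ : ℝ => ENNReal.ofReal (σ⁻¹ * ‖S (T (σ / c2) x)‖)) (Set.Ioi 0) := by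
    apply ENNReal.continuous_ofReal.comp_continuousOn
    apply ContinuousOn.mul
    · exact continuousOn_inv₀.mono fun σ hσ => ne_of_gt hσ
    · have h1 := h.cont x 0
      have h2 : ContinuousOn (fun σ : ℝ => σ / c2) (Set.Ioi 0) :=
        (continuous_id.div_const c2).continuousOn
      have h3 : Set.MapsTo (fun σ : ℝ => σ / c2) (Set.Ioi 0) (Set.Ioi 0) :=
        fun σ hσ => Set.mem_Ioi.2 (div_pos hσ hc2)
      have := (h1.comp h2 h3).norm
      simpa using this
  have hFmeas : Measurable F := measurable_piecewise_of_continuousOn hFcont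
  have hFeq : ∀ σ : ℝ, 0 < σ → F σ = ENNReal.ofReal (σ⁻¹ * ‖S (T (σ / c2) x)‖) :=
    fun σ hσ => Set.piecewise_eq_of_mem _ _ _ hσ
  have hFtop : ∀ σ, F σ ≠ ∞ := by
    intro σ
    rw [hFdef]
    by_cases hσ : σ ∈ Set.Ioi (0 : ℝ)
    · rw [Set.piecewise_eq_of_mem _ _ _ hσ]; exact ENNReal.ofReal_ne_top
    · rw [Set.piecewise_eq_of_notMem _ _ _ hσ]; exact ENNReal.zero_ne_top
  -- pointwise bound
  have hpt : ∀ τ ∈ Set.Ioi (0 : ℝ), ∀ t ∈ Set.Ioi (0 : ℝ),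
      ENNReal.ofReal (t ^ (-s / 2) * (τ ^ k * ‖S^[k + 2] (T (t + τ) x)‖))
        ≤ ENNReal.ofReal A * (ENNReal.ofReal (t ^ (-s / 2)) * F (t + τ)) := by
    intro τ hτ t ht
    rw [Set.mem_Ioi] at hτ ht
    have hσ : 0 < t + τ := by linarith
    rw [hFeq _ hσ, ← ENNReal.ofReal_mul (by positivity), ← ENNReal.ofReal_mul hA]
    apply ENNReal.ofReal_le_ofReal
    have hb := h.iter_bound x (k + 1) (t + τ) hσ
    have ecast : ((k + 1 : ℕ) : ℝ) + 1 = c2 := by rw [hc2def]; push_cast; ring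
    rw [ecast] at hb
    have hcoef : (c2 * max C₀ 0 / (t + τ)) ^ (k + 1) = A / (t + τ) ^ (k + 1) := by
      rw [div_pow, hAdef]
    rw [hcoef] at hb
    have h2 : τ ^ k * ‖S^[k + 2] (T (t + τ) x)‖
        ≤ A * ((t + τ)⁻¹ * ‖S (T ((t + τ) / c2) x)‖) := by
      have hτσ : τ ^ k ≤ (t + τ) ^ k := pow_le_pow_left₀ hτ.le (by linarith) k
      calc τ ^ k * ‖S^[k + 2] (T (t + τ) x)‖
          ≤ τ ^ k * (A / (t + τ) ^ (k + 1) * ‖S (T ((t + τ) / c2) x)‖) :=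
            mul_le_mul_of_nonneg_left hb (by positivity)
        _ ≤ (t + τ) ^ k * (A / (t + τ) ^ (k + 1) * ‖S (T ((t + τ) / c2) x)‖) :=
            mul_le_mul_of_nonneg_right hτσ (by positivity)
        _ = A * ((t + τ)⁻¹ * ‖S (T ((t + τ) / c2) x)‖) := by
            rw [pow_succ]
            field_simp
    calc t ^ (-s / 2) * (τ ^ k * ‖S^[k + 2] (T (t + τ) x)‖)
        ≤ t ^ (-s / 2) * (A * ((t + τ)⁻¹ * ‖S (T ((t + τ) / c2) x)‖)) :=
          mul_le_mul_of_nonneg_left h2 (Real.rpow_nonneg ht.le _)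
      _ = A * (t ^ (-s / 2) * ((t + τ)⁻¹ * ‖S (T ((t + τ) / c2) x)‖)) := by ring
  have h2s : (0 : ℝ) < 2 - s := by linarith
  have hg1 : AEMeasurable
      (Function.uncurry (fun τ t : ℝ => ENNReal.ofReal (t ^ (-s / 2)) * F (t + τ)))
      ((volume.restrict (Set.Ioi 0)).prod (volume.restrict (Set.Ioi 0))) := by
    apply Measurable.aemeasurable
    exact ((measurable_snd.pow measurable_const).ennreal_ofReal).mul
      (hFmeas.comp (measurable_snd.add measurable_fst))
  have hg2 : AEMeasurable
      (Function.uncurry (fun t σ : ℝ => ENNReal.ofReal (t ^ (-s / 2)) * (Set.Ioi t).indicator F σ))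
      ((volume.restrict (Set.Ioi 0)).prod (volume.restrict (Set.Ioi 0))) := by
    apply Measurable.aemeasurable
    have huncurry : (Function.uncurry
        (fun t σ : ℝ => ENNReal.ofReal (t ^ (-s / 2)) * (Set.Ioi t).indicator F σ))
        = fun p : ℝ × ℝ => ENNReal.ofReal (p.1 ^ (-s / 2)) *
            ({q : ℝ × ℝ | q.1 < q.2}.indicator (fun q => F q.2) p) := by
      funext p
      simp [Function.uncurry, Set.indicator_apply]
    rw [huncurry]
    exact ((measurable_fst.pow measurable_const).ennreal_ofReal).mul
      ((hFmeas.comp measurable_snd).indicator (measurableSet_lt measurable_fst measurable_snd))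
  calc (∫⁻ τ in Set.Ioi (0 : ℝ), ∫⁻ t in Set.Ioi (0 : ℝ),
        ENNReal.ofReal (t ^ (-s / 2) * (τ ^ k * ‖S^[k + 2] (T (t + τ) x)‖)))
      ≤ ∫⁻ τ in Set.Ioi (0 : ℝ), ∫⁻ t in Set.Ioi (0 : ℝ),
          ENNReal.ofReal A * (ENNReal.ofReal (t ^ (-s / 2)) * F (t + τ)) := by
        apply lintegral_mono_ae
        refine (ae_restrict_iff' measurableSet_Ioi).2 (ae_of_all _ fun τ hτ => ?_)
        apply lintegral_mono_ae
        exact (ae_restrict_iff' measurableSet_Ioi).2 (ae_of_all _ fun t ht => hpt τ hτ t ht)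
    _ = ENNReal.ofReal A * ∫⁻ τ in Set.Ioi (0 : ℝ), ∫⁻ t in Set.Ioi (0 : ℝ),
          ENNReal.ofReal (t ^ (-s / 2)) * F (t + τ) := by
        simp_rw [lintegral_const_mul' (ENNReal.ofReal A) _ ENNReal.ofReal_ne_top]
    _ = ENNReal.ofReal A * ∫⁻ t in Set.Ioi (0 : ℝ), ∫⁻ τ in Set.Ioi (0 : ℝ),
          ENNReal.ofReal (t ^ (-s / 2)) * F (t + τ) := by
        rw [lintegral_lintegral_swap hg1]
    _ = ENNReal.ofReal A * ∫⁻ t in Set.Ioi (0 : ℝ), ∫⁻ σ in Set.Ioi (0 : ℝ),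
          ENNReal.ofReal (t ^ (-s / 2)) * (Set.Ioi t).indicator F σ := by
        congr 1
        refine setLIntegral_congr_fun measurableSet_Ioi (fun t ht => ?_)
        rw [Set.mem_Ioi] at ht
        calc ∫⁻ τ in Set.Ioi (0 : ℝ), ENNReal.ofReal (t ^ (-s / 2)) * F (t + τ)
            = ENNReal.ofReal (t ^ (-s / 2)) * ∫⁻ τ in Set.Ioi (0 : ℝ), F (τ + t) := by
              rw [lintegral_const_mul' _ _ ENNReal.ofReal_ne_top]
              congr 1
              exact lintegral_congr fun τ => by rw [add_comm]
          _ = ENNReal.ofReal (t ^ (-s / 2)) * ∫⁻ σ in Set.Ioi t, F σ := by rw [lint_shift]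
          _ = ENNReal.ofReal (t ^ (-s / 2)) *
              ∫⁻ σ in Set.Ioi (0 : ℝ), (Set.Ioi t).indicator F σ := by
              rw [lintegral_indicator measurableSet_Ioi,
                Measure.restrict_restrict measurableSet_Ioi,
                Set.inter_eq_self_of_subset_left (Set.Ioi_subset_Ioi ht.le)]
          _ = ∫⁻ σ in Set.Ioi (0 : ℝ),
              ENNReal.ofReal (t ^ (-s / 2)) * (Set.Ioi t).indicator F σ := by
              rw [lintegral_const_mul' _ _ ENNReal.ofReal_ne_top]
    _ = ENNReal.ofReal A * ∫⁻ σ in Set.Ioi (0 : ℝ), ∫⁻ t in Set.Ioi (0 : ℝ),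
          ENNReal.ofReal (t ^ (-s / 2)) * (Set.Ioi t).indicator F σ := by
        rw [lintegral_lintegral_swap hg2]
    _ = ENNReal.ofReal A * ∫⁻ σ in Set.Ioi (0 : ℝ),
          ENNReal.ofReal (2 / (2 - s)) *
            ENNReal.ofReal (σ ^ (-s / 2) * ‖S (T (σ / c2) x)‖) := by
        congr 1
        refine setLIntegral_congr_fun measurableSet_Ioi (fun σ hσ => ?_)
        rw [Set.mem_Ioi] at hσ
        calc ∫⁻ t in Set.Ioi (0 : ℝ),
              ENNReal.ofReal (t ^ (-s / 2)) * (Set.Ioi t).indicator F σ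
            = ∫⁻ t in Set.Ioi (0 : ℝ),
                (Set.Iio σ).indicator (fun t => ENNReal.ofReal (t ^ (-s / 2)) * F σ) t := by
              apply lintegral_congr
              intro t
              by_cases htσ : t < σ
              · simp [Set.indicator_apply, htσ]
              · simp [Set.indicator_apply, htσ]
          _ = ∫⁻ t in Set.Ioo (0 : ℝ) σ, ENNReal.ofReal (t ^ (-s / 2)) * F σ := by
              rw [lintegral_indicator measurableSet_Iio,
                Measure.restrict_restrict measurableSet_Iio]
              congr 1
              rw [Set.Iio_inter_Ioi]
          _ = (∫⁻ t in Set.Ioo (0 : ℝ) σ, ENNReal.ofReal (t ^ (-s / 2))) * F σ :=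
              lintegral_mul_const' _ _ (hFtop σ)
          _ = ENNReal.ofReal (2 / (2 - s)) *
              ENNReal.ofReal (σ ^ (-s / 2) * ‖S (T (σ / c2) x)‖) := by
              rw [lint_rpow hs0 hs2 hσ, hFeq σ hσ,
                ← ENNReal.ofReal_mul (mul_nonneg (div_nonneg (by norm_num) h2s.le)
                  (Real.rpow_nonneg hσ.le _)),
                ← ENNReal.ofReal_mul (div_nonneg (by norm_num) h2s.le)]
              congr 1
              have e : σ ^ (1 - s / 2) * σ⁻¹ = σ ^ (-s / 2) := by
                rw [← Real.rpow_neg_one σ, ← Real.rpow_add hσ,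
                  show 1 - s / 2 + -1 = -s / 2 by ring]
              calc (2 / (2 - s) * σ ^ (1 - s / 2)) * (σ⁻¹ * ‖S (T (σ / c2) x)‖)
                  = 2 / (2 - s) * ((σ ^ (1 - s / 2) * σ⁻¹) * ‖S (T (σ / c2) x)‖) := by ring
                _ = 2 / (2 - s) * (σ ^ (-s / 2) * ‖S (T (σ / c2) x)‖) := by rw [e]
    _ = ENNReal.ofReal A * (ENNReal.ofReal (2 / (2 - s)) *
          ∫⁻ σ in Set.Ioi (0 : ℝ), ENNReal.ofReal (σ ^ (-s / 2) * ‖S (T (σ / c2) x)‖)) := by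
        rw [lintegral_const_mul' _ _ ENNReal.ofReal_ne_top]
    _ = ENNReal.ofReal A * (ENNReal.ofReal (2 / (2 - s)) * (ENNReal.ofReal c2 *
          ∫⁻ r in Set.Ioi (0 : ℝ),
            ENNReal.ofReal ((c2 * r) ^ (-s / 2) * ‖S (T (c2 * r / c2) x)‖))) := by
        rw [lint_scale hc2 (fun σ => ENNReal.ofReal (σ ^ (-s / 2) * ‖S (T (σ / c2) x)‖))]
    _ = ENNReal.ofReal A * (ENNReal.ofReal (2 / (2 - s)) * (ENNReal.ofReal c2 *
          (ENNReal.ofReal (c2 ^ (-s / 2)) * BsNorm S T s x))) := by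
        have hpt2 : ∀ r ∈ Set.Ioi (0 : ℝ),
            ENNReal.ofReal ((c2 * r) ^ (-s / 2) * ‖S (T (c2 * r / c2) x)‖)
              = ENNReal.ofReal (c2 ^ (-s / 2)) *
                  ENNReal.ofReal (r ^ (-s / 2) * ‖S (T r x)‖) := by
          intro r hr
          rw [Set.mem_Ioi] at hr
          rw [mul_div_cancel_left₀ r hc2.ne', Real.mul_rpow hc2.le hr.le, mul_assoc,
            ENNReal.ofReal_mul (Real.rpow_nonneg hc2.le _)]
        rw [setLIntegral_congr_fun measurableSet_Ioi hpt2,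
          lintegral_const_mul' _ _ ENNReal.ofReal_ne_top, BsNorm]
    _ = ENNReal.ofReal (A * (2 / (2 - s)) * (c2 * c2 ^ (-s / 2))) * BsNorm S T s x := by
        rw [ENNReal.ofReal_mul (mul_nonneg hA (div_nonneg (by norm_num) h2s.le)),
          ENNReal.ofReal_mul hA,
          ENNReal.ofReal_mul hc2.le]
        ring

end IsBAS

/-- Integrated smoothing bound in `Ḃˢ`: for every `k ≥ 0` and `s ∈ (0,2)` there is
`C = C(s,k,M,C₀)` with
`∫₀^∞ ‖τ^{k+1}S^{k+1}(T(τ)x)‖_{Ḃˢ} dτ/τ ≤ C‖x‖_{Ḃˢ}` for every `x ∈ D(S)`;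
in particular (`k = 0`) `∫₀^∞ ‖S(T(τ)x)‖_{Ḃˢ} dτ ≤ C‖x‖_{Ḃˢ}`. -/
theorem global_in_time_bound_in_Bs (k : ℕ) (s : ℝ) (hs0 : 0 < s) (hs2 : s < 2)
    (M C₀ : ℝ) :
    ∃ C : ℝ≥0, ∀ (D : Set X) (S : X → X) (T : ℝ → X →L[ℝ] X),
      IsBAS D S T M C₀ → ∀ x ∈ D,
      (∫⁻ τ in Set.Ioi (0 : ℝ),
          BsNorm S T s (τ ^ (k + 1) • S^[k + 1] (T τ x)) * ENNReal.ofReal τ⁻¹)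
        ≤ C * BsNorm S T s x ∧
      (∫⁻ τ in Set.Ioi (0 : ℝ), BsNorm S T s (S (T τ x)))
        ≤ C * BsNorm S T s x := by
  set Cr : ℕ → ℝ := fun j =>
    (((j : ℝ) + 2) * max C₀ 0) ^ (j + 1) * (2 / (2 - s)) *
      (((j : ℝ) + 2) * ((j : ℝ) + 2) ^ (-s / 2)) with hCr
  have hCrnn : ∀ j : ℕ, 0 ≤ Cr j := by
    intro j
    have h2s : (0 : ℝ) < 2 - s := by linarith
    have hj : (0 : ℝ) ≤ (j : ℝ) + 2 := by positivity
    exact mul_nonneg (mul_nonneg (pow_nonneg (mul_nonneg hj (le_max_right _ _)) _)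
      (div_nonneg (by norm_num) h2s.le))
      (mul_nonneg hj (Real.rpow_nonneg hj _))
  refine ⟨(Cr k + Cr 0).toNNReal, fun D S T hT x hx => ?_⟩
  have hcoe : (((Cr k + Cr 0).toNNReal : ℝ≥0) : ℝ≥0∞) = ENNReal.ofReal (Cr k + Cr 0) := rfl
  constructor
  · have e1 : ∀ τ ∈ Set.Ioi (0 : ℝ),
        BsNorm S T s (τ ^ (k + 1) • S^[k + 1] (T τ x)) * ENNReal.ofReal τ⁻¹
          = ∫⁻ t in Set.Ioi (0 : ℝ),
              ENNReal.ofReal (t ^ (-s / 2) * (τ ^ k * ‖S^[k + 2] (T (t + τ) x)‖)) := by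
      intro τ hτ
      rw [Set.mem_Ioi] at hτ
      have hy : S^[k + 1] (T τ x) ∈ D := (hT.mem_comm x (k + 1) τ hτ).1
      rw [BsNorm, ← lintegral_mul_const' _ _ ENNReal.ofReal_ne_top]
      refine setLIntegral_congr_fun measurableSet_Ioi (fun t ht => ?_)
      rw [Set.mem_Ioi] at ht
      have hTsm : T t (τ ^ (k + 1) • S^[k + 1] (T τ x))
          = τ ^ (k + 1) • T t (S^[k + 1] (T τ x)) := (T t).map_smul _ _
      have hTty : T t (S^[k + 1] (T τ x)) ∈ D := hT.T_mem _ hy t ht.le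
      rw [hTsm, hT.map_smul _ _ hTty, norm_smul, hT.inner_eq x k hτ ht,
        Real.norm_eq_abs, abs_of_pos (pow_pos hτ _),
        ← ENNReal.ofReal_mul (by positivity)]
      congr 1
      rw [pow_succ]
      field_simp
    rw [setLIntegral_congr_fun measurableSet_Ioi e1]
    refine (hT.key_bound hs0 hs2 k x).trans ?_
    rw [hcoe]
    exact mul_le_mul_left
      (ENNReal.ofReal_le_ofReal (le_add_of_nonneg_right (hCrnn 0))) _
  · have e2 : ∀ τ ∈ Set.Ioi (0 : ℝ),
        BsNorm S T s (S (T τ x))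
          = ∫⁻ t in Set.Ioi (0 : ℝ),
              ENNReal.ofReal (t ^ (-s / 2) * ((τ : ℝ) ^ (0 : ℕ) * ‖S^[0 + 2] (T (t + τ) x)‖)) := by
      intro τ hτ
      rw [Set.mem_Ioi] at hτ
      rw [BsNorm]
      refine setLIntegral_congr_fun measurableSet_Ioi (fun t ht => ?_)
      rw [Set.mem_Ioi] at ht
      have hSi : S (T t (S (T τ x))) = S^[0 + 2] (T (t + τ) x) := hT.inner_eq x 0 hτ ht
      rw [hSi, pow_zero, one_mul]
    rw [setLIntegral_congr_fun measurableSet_Ioi e2]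
    refine (hT.key_bound hs0 hs2 0 x).trans ?_
    rw [hcoe]
    exact mul_le_mul_left
      (ENNReal.ofReal_le_ofReal (le_add_of_nonneg_left (hCrnn k))) _
end
end

section
/- Let (X,‖·‖) be a real Banach space and let S, with domain D(S) ⊆ X, generate a bounded analytic semigroup (T(t))_{t≥0} with constants M, C₀ as in the context. Then for every integer k ≥ 0 and every s ∈ (0,2) there exists a constant C = C(s,k,M,C₀) such that for every x in the range of S: ∫₀^∞ ‖τ^{k+1}S^{k+1}(T(τ)x)‖_{Ḃ⁻ˢ} dτ/τ ≤ C‖x‖_{Ḃ⁻ˢ}. In particular (k = 0): ∫₀^∞ ‖S(T(τ)x)‖_{Ḃ⁻ˢ} dτ ≤ C‖x‖_{Ḃ⁻ˢ}. -/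
open MeasureTheory
open scoped ENNReal NNReal

noncomputable section

variable {X : Type*} [NormedAddCommGroup X] [NormedSpace ℝ X] [CompleteSpace X]

namespace BAStest

variable {D : Set X} {S : X → X} {T : ℝ → X →L[ℝ] X} {M C₀ : ℝ}

lemma half_split (hT : IsBAS D S T M C₀) (z : X) {u : ℝ} (hu : 0 < u) :
    S (T u z) = T (u/2) (S (T (u/2) z)) := by
  have h2 : (0:ℝ) < u/2 := by linarith
  have h3 : T u z = T (u/2) (T (u/2) z) := by
    conv_lhs => rw [show u = u/2 + u/2 by ring]
    rw [hT.T_semigroup _ h2.le _ h2.le]; rfl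
  rw [h3, hT.T_comm _ (hT.analytic_mem z _ h2) _ h2.le]

lemma comm_gen (hT : IsBAS D S T M C₀) (z : X) {u v : ℝ} (hu : 0 < u) (hv : 0 ≤ v) :
    S (T (v + u) z) = T v (S (T u z)) := by
  rw [hT.T_semigroup _ hv _ hu.le, ContinuousLinearMap.comp_apply,
    hT.T_comm _ (hT.analytic_mem z _ hu) _ hv]

lemma iterate_comm (hT : IsBAS D S T M C₀) (m : ℕ) (z : X) {t τ : ℝ}
    (ht : 0 ≤ t) (hτ : 0 < τ) : T t (S^[m] (T τ z)) = S^[m] (T (t + τ) z) := by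
  induction m generalizing z τ with
  | zero =>
    simp only [Function.iterate_zero, id_eq]
    rw [hT.T_semigroup _ ht _ hτ.le]; rfl
  | succ n ih =>
    have h2 : (0:ℝ) < τ/2 := by linarith
    rw [Function.iterate_succ_apply, Function.iterate_succ_apply,
      half_split hT z hτ, ih _ h2]
    congr 1
    rw [show t + τ = (t + τ/2) + τ/2 by ring]
    exact (comm_gen hT z h2 (by linarith)).symm

lemma iterate_bound (M C₀ : ℝ) (m : ℕ) :
    ∃ B : ℝ, 0 ≤ B ∧ ∀ (D : Set X) (S : X → X) (T : ℝ → X →L[ℝ] X),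
      IsBAS D S T M C₀ → ∀ (z : X) (u : ℝ), 0 < u →
      ‖S^[m] (T u z)‖ ≤ B * ‖z‖ / u ^ m := by
  induction m with
  | zero =>
    refine ⟨|M|, abs_nonneg M, fun D S T hT z u hu => ?_⟩
    simp only [Function.iterate_zero, id_eq, pow_zero, div_one]
    exact (hT.T_bdd u hu.le z).trans
      (mul_le_mul_of_nonneg_right (le_abs_self M) (norm_nonneg z))
  | succ n ih =>
    obtain ⟨B, hB0, hB⟩ := ih
    refine ⟨B * 2 ^ (n+1) * |C₀|, by positivity, fun D S T hT z u hu => ?_⟩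
    have h2 : (0:ℝ) < u/2 := by linarith
    have hu' : u ≠ 0 := ne_of_gt hu
    have hw : ‖S (T (u/2) z)‖ ≤ 2 * |C₀| * ‖z‖ / u := by
      have h1 := hT.analytic_bdd z (u/2) h2
      have h3 : C₀ * ‖z‖ ≤ |C₀| * ‖z‖ :=
        mul_le_mul_of_nonneg_right (le_abs_self C₀) (norm_nonneg z)
      rw [le_div_iff₀ hu]
      nlinarith [norm_nonneg (S (T (u/2) z))]
    calc ‖S^[n+1] (T u z)‖ = ‖S^[n] (T (u/2) (S (T (u/2) z)))‖ := by
          rw [Function.iterate_succ_apply, half_split hT z hu]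
      _ ≤ B * ‖S (T (u/2) z)‖ / (u/2)^n := hB D S T hT _ _ h2
      _ ≤ B * (2 * |C₀| * ‖z‖ / u) / (u/2)^n := by gcongr
      _ = B * 2^(n+1) * |C₀| * ‖z‖ / u^(n+1) := by
          rw [div_pow]; field_simp; ring

end BAStest

namespace BAStest

lemma rpow_lint (s : ℝ) (hs0 : 0 < s) {v : ℝ} (hv : 0 < v) :
    ∫⁻ t in Set.Ioo (0:ℝ) v, ENNReal.ofReal (t ^ (s/2 - 1)) =
      ENNReal.ofReal (v ^ (s/2) * (2/s)) := by
  have hr : (-1:ℝ) < s/2 - 1 := by linarith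
  have hint : IntegrableOn (fun t : ℝ => t ^ (s/2 - 1)) (Set.Ioc 0 v) := by
    have h := intervalIntegral.intervalIntegrable_rpow' (a := 0) (b := v) hr
    rwa [intervalIntegrable_iff_integrableOn_Ioc_of_le hv.le] at h
  rw [setLIntegral_congr Ioo_ae_eq_Ioc]
  rw [← ofReal_integral_eq_lintegral_ofReal hint ?_]
  · congr 1
    have h2 : ∫ t in Set.Ioc (0:ℝ) v, t ^ (s/2-1) =
        ((v:ℝ) ^ (s/2-1+1) - (0:ℝ) ^ (s/2-1+1)) / (s/2-1+1) := by
      rw [← intervalIntegral.integral_of_le hv.le]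
      exact integral_rpow (Or.inl hr)
    rw [h2, show s/2-1+1 = s/2 by ring, Real.zero_rpow (ne_of_gt (by linarith)), sub_zero]
    field_simp
  · filter_upwards [ae_restrict_mem measurableSet_Ioc] with t ht
    exact Real.rpow_nonneg ht.1.le _

lemma translate_lint (t : ℝ) (g : ℝ → ℝ≥0∞) :
    ∫⁻ τ in Set.Ioi (0:ℝ), g (t + τ) = ∫⁻ v in Set.Ioi t, g v := by
  have hmp : MeasurePreserving (fun τ : ℝ => t + τ) volume volume :=
    measurePreserving_add_left volume t
  have hemb : MeasurableEmbedding (fun τ : ℝ => t + τ) :=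
    (Homeomorph.addLeft t).measurableEmbedding
  have h := hmp.setLIntegral_comp_preimage_emb hemb g (Set.Ioi t)
  have hpre : (fun τ : ℝ => t + τ) ⁻¹' Set.Ioi t = Set.Ioi 0 := by
    ext τ
    simp only [Set.mem_preimage, Set.mem_Ioi]
    constructor <;> intro h <;> linarith
  rwa [hpre] at h

lemma scale_lint (g : ℝ → ℝ≥0∞) :
    ∫⁻ v in Set.Ioi (0:ℝ), g v = 2 * ∫⁻ u in Set.Ioi (0:ℝ), g (2*u) := by
  have hmp : MeasurePreserving (fun u : ℝ => 2*u) ((2:ℝ≥0∞) • volume) volume := by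
    refine ⟨measurable_const_mul 2, ?_⟩
    rw [Measure.map_smul, Real.map_volume_mul_left (two_ne_zero), smul_smul]
    have h1 : (2:ℝ≥0∞) * ENNReal.ofReal |(2:ℝ)⁻¹| = 1 := by
      rw [abs_of_pos (by norm_num : (0:ℝ) < 2⁻¹),
        show ((2:ℝ≥0∞)) = ENNReal.ofReal (2:ℝ) from (ENNReal.ofReal_ofNat 2).symm,
        ← ENNReal.ofReal_mul (by norm_num)]
      norm_num
    rw [h1, one_smul]
  have hemb : MeasurableEmbedding (fun u : ℝ => 2*u) :=
    (Homeomorph.mulLeft₀ 2 two_ne_zero).measurableEmbedding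
  have h := hmp.setLIntegral_comp_preimage_emb hemb g (Set.Ioi 0)
  have hpre : (fun u : ℝ => 2*u) ⁻¹' Set.Ioi 0 = Set.Ioi 0 := by
    ext u
    simp only [Set.mem_preimage, Set.mem_Ioi]
    constructor <;> intro h <;> linarith
  rw [hpre] at h
  rw [← h, Measure.restrict_smul, lintegral_smul_measure, smul_eq_mul]

end BAStest

namespace BAStest

lemma key (k : ℕ) (s : ℝ) (hs0 : 0 < s) (hs2 : s < 2) (M C₀ : ℝ) :
    ∃ C : ℝ≥0, ∀ (D : Set X) (S : X → X) (T : ℝ → X →L[ℝ] X),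
      IsBAS D S T M C₀ → ∀ x : X,
      (∫⁻ τ in Set.Ioi (0 : ℝ),
          BnegNorm T s (τ ^ (k + 1) • S^[k + 1] (T τ x)) * ENNReal.ofReal τ⁻¹)
        ≤ C * BnegNorm T s x := by
  obtain ⟨B, hB0, hB⟩ := iterate_bound (X := X) M C₀ (k+1)
  set B2 : ℝ := B * 2 ^ (k+1) with hB2def
  have hB20 : 0 ≤ B2 := by positivity
  set Cr : ℝ := B2 * ((2/s) * (2 * (2:ℝ) ^ (s/2 - 1))) with hCrdef
  have hCr0 : 0 ≤ Cr := by positivity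
  refine ⟨Cr.toNNReal, fun D S T hT x => ?_⟩
  set G : ℝ → ℝ := fun v => v⁻¹ * ‖T (v/2) x‖ with hGdef
  have hTc : ContinuousOn (fun v : ℝ => ‖T v x‖) (Set.Ici 0) := (hT.T_cont x).norm
  have hGc : ContinuousOn G (Set.Ioi 0) := by
    apply ContinuousOn.mul
    · exact continuousOn_id.inv₀ fun v hv => ne_of_gt (Set.mem_Ioi.mp hv)
    · exact hTc.comp ((continuous_id.div_const 2).continuousOn)
        fun v hv => Set.mem_Ici.mpr (half_pos (Set.mem_Ioi.mp hv)).le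
  have step1 : ∀ τ ∈ Set.Ioi (0:ℝ),
      BnegNorm T s (τ ^ (k+1) • S^[k+1] (T τ x)) * ENNReal.ofReal τ⁻¹
        ≤ ∫⁻ t in Set.Ioi (0:ℝ), ENNReal.ofReal (B2 * (t ^ (s/2 - 1) * G (t+τ))) := by
    intro τ hτ
    rw [Set.mem_Ioi] at hτ
    simp only [BnegNorm]
    rw [← lintegral_mul_const' (ENNReal.ofReal τ⁻¹) _ ENNReal.ofReal_ne_top]
    refine lintegral_mono_ae ?_
    filter_upwards [ae_restrict_mem measurableSet_Ioi] with t ht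
    rw [Set.mem_Ioi] at ht
    have hv : (0:ℝ) < t + τ := by linarith
    have hv2 : (0:ℝ) < (t+τ)/2 := by linarith
    have hTy : ‖T t (τ ^ (k+1) • S^[k+1] (T τ x))‖
        = τ ^ (k+1) * ‖S^[k+1] (T (t+τ) x)‖ := by
      rw [_root_.map_smul, norm_smul, Real.norm_eq_abs, abs_of_pos (pow_pos hτ _),
        iterate_comm hT (k+1) x ht.le hτ]
    have hid : S^[k+1] (T (t+τ) x) = S^[k+1] (T ((t+τ)/2) (T ((t+τ)/2) x)) := by
      congr 1
      conv_lhs => rw [show t + τ = (t+τ)/2 + (t+τ)/2 by ring]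
      rw [hT.T_semigroup _ hv2.le _ hv2.le]; rfl
    have hbound : ‖S^[k+1] (T (t+τ) x)‖ ≤ B * ‖T ((t+τ)/2) x‖ / ((t+τ)/2) ^ (k+1) := by
      rw [hid]; exact hB D S T hT _ _ hv2
    rw [← ENNReal.ofReal_mul (by positivity)]
    apply ENNReal.ofReal_le_ofReal
    rw [hTy]
    set A := ‖S^[k+1] (T (t+τ) x)‖ with hA
    set w := ‖T ((t+τ)/2) x‖ with hw
    have hp : (0:ℝ) ≤ t ^ (s/2 - 1) := Real.rpow_nonneg ht.le _
    have key0 : τ ^ (k+1) * A * τ⁻¹ ≤ B2 * ((t+τ)⁻¹ * w) := by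
      have e1 : τ ^ (k+1) * A * τ⁻¹ = τ ^ k * A := by
        rw [pow_succ]; field_simp
      have e2 : τ ^ k * A ≤ (t+τ) ^ k * (B * w / ((t+τ)/2) ^ (k+1)) := by
        have h3 : τ ^ k ≤ (t+τ) ^ k := pow_le_pow_left₀ hτ.le (by linarith) k
        calc τ ^ k * A ≤ τ ^ k * (B * w / ((t+τ)/2) ^ (k+1)) :=
              mul_le_mul_of_nonneg_left hbound (by positivity)
          _ ≤ (t+τ) ^ k * (B * w / ((t+τ)/2) ^ (k+1)) :=
              mul_le_mul_of_nonneg_right h3 (by positivity)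
      have e3 : (t+τ) ^ k * (B * w / ((t+τ)/2) ^ (k+1)) = B2 * ((t+τ)⁻¹ * w) := by
        rw [hB2def, div_pow]
        field_simp
        ring
      rw [e1, ← e3]; exact e2
    calc t ^ (s/2-1) * (τ ^ (k+1) * A) * τ⁻¹
        = t ^ (s/2-1) * (τ ^ (k+1) * A * τ⁻¹) := by ring
      _ ≤ t ^ (s/2-1) * (B2 * ((t+τ)⁻¹ * w)) := mul_le_mul_of_nonneg_left key0 hp
      _ = B2 * (t ^ (s/2-1) * G (t+τ)) := by simp only [hGdef, hw]; ring
  calc (∫⁻ τ in Set.Ioi (0 : ℝ),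
          BnegNorm T s (τ ^ (k + 1) • S^[k + 1] (T τ x)) * ENNReal.ofReal τ⁻¹)
      ≤ ∫⁻ τ in Set.Ioi (0:ℝ), ∫⁻ t in Set.Ioi (0:ℝ),
          ENNReal.ofReal (B2 * (t ^ (s/2-1) * G (t+τ))) := by
        refine lintegral_mono_ae ?_
        filter_upwards [ae_restrict_mem measurableSet_Ioi] with τ hτ using step1 τ hτ
    _ = ENNReal.ofReal B2 * ∫⁻ τ in Set.Ioi (0:ℝ), ∫⁻ t in Set.Ioi (0:ℝ),
          ENNReal.ofReal (t ^ (s/2-1) * G (t+τ)) := by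
        simp_rw [ENNReal.ofReal_mul hB20]
        have h1 : ∀ τ : ℝ, (∫⁻ t in Set.Ioi (0:ℝ),
            ENNReal.ofReal B2 * ENNReal.ofReal (t ^ (s/2-1) * G (t+τ)))
            = ENNReal.ofReal B2 * ∫⁻ t in Set.Ioi (0:ℝ),
              ENNReal.ofReal (t ^ (s/2-1) * G (t+τ)) :=
          fun τ => lintegral_const_mul' _ _ ENNReal.ofReal_ne_top
        simp_rw [h1]
        exact lintegral_const_mul' _ _ ENNReal.ofReal_ne_top
    _ = ENNReal.ofReal B2 * ∫⁻ t in Set.Ioi (0:ℝ), ∫⁻ τ in Set.Ioi (0:ℝ),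
          ENNReal.ofReal (t ^ (s/2-1) * G (t+τ)) := by
        congr 1
        refine lintegral_lintegral_swap ?_
        rw [Measure.prod_restrict]
        refine ContinuousOn.aemeasurable ?_ (measurableSet_Ioi.prod measurableSet_Ioi)
        refine ENNReal.continuous_ofReal.comp_continuousOn (ContinuousOn.mul ?_ ?_)
        · exact (continuous_snd.continuousOn).rpow_const
            fun p hp => Or.inl (ne_of_gt (Set.mem_Ioi.mp hp.2))
        · exact hGc.comp ((continuous_snd.add continuous_fst).continuousOn)
            fun p hp => Set.mem_Ioi.mpr (add_pos (Set.mem_Ioi.mp hp.2) (Set.mem_Ioi.mp hp.1))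
    _ = ENNReal.ofReal B2 * ∫⁻ t in Set.Ioi (0:ℝ), ∫⁻ v in Set.Ioi t,
          ENNReal.ofReal (t ^ (s/2-1) * G v) := by
        congr 1
        exact lintegral_congr fun t =>
          translate_lint t (fun v => ENNReal.ofReal (t ^ (s/2-1) * G v))
    _ = ENNReal.ofReal B2 * ∫⁻ t in Set.Ioi (0:ℝ), ∫⁻ v in Set.Ioi (0:ℝ),
          Set.indicator (Set.Ioi t) (fun v => ENNReal.ofReal (t ^ (s/2-1) * G v)) v := by
        congr 1
        refine setLIntegral_congr_fun measurableSet_Ioi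
          (fun t ht => ?_)
        rw [lintegral_indicator measurableSet_Ioi, Measure.restrict_restrict measurableSet_Ioi,
          Set.inter_eq_left.mpr (Set.Ioi_subset_Ioi (le_of_lt (Set.mem_Ioi.mp ht)))]
    _ = ENNReal.ofReal B2 * ∫⁻ v in Set.Ioi (0:ℝ), ∫⁻ t in Set.Ioi (0:ℝ),
          Set.indicator (Set.Ioi t) (fun v => ENNReal.ofReal (t ^ (s/2-1) * G v)) v := by
        congr 1
        refine lintegral_lintegral_swap ?_
        rw [Measure.prod_restrict]
        have huncurry : (Function.uncurry fun t v =>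
            Set.indicator (Set.Ioi t) (fun v => ENNReal.ofReal (t ^ (s/2-1) * G v)) v)
            = Set.indicator {p : ℝ × ℝ | p.1 < p.2}
              (fun p => ENNReal.ofReal (p.1 ^ (s/2-1) * G p.2)) := by
          funext p
          simp only [Function.uncurry, Set.indicator_apply, Set.mem_Ioi, Set.mem_setOf_eq]
        rw [huncurry]
        refine AEMeasurable.indicator ?_ (measurableSet_lt measurable_fst measurable_snd)
        refine ContinuousOn.aemeasurable ?_ (measurableSet_Ioi.prod measurableSet_Ioi)
        refine ENNReal.continuous_ofReal.comp_continuousOn (ContinuousOn.mul ?_ ?_)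
        · exact (continuous_fst.continuousOn).rpow_const
            fun p hp => Or.inl (ne_of_gt (Set.mem_Ioi.mp hp.1))
        · exact hGc.comp continuous_snd.continuousOn fun p hp => hp.2
    _ = ENNReal.ofReal B2 * ∫⁻ v in Set.Ioi (0:ℝ),
          ENNReal.ofReal (v ^ (s/2) * (2/s)) * ENNReal.ofReal (G v) := by
        congr 1
        refine setLIntegral_congr_fun measurableSet_Ioi
          (fun v hv => ?_)
        have hv' : (0:ℝ) < v := Set.mem_Ioi.mp hv
        have hswap_ind : ∀ t : ℝ,
            Set.indicator (Set.Ioi t) (fun w => ENNReal.ofReal (t ^ (s/2-1) * G w)) v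
            = Set.indicator (Set.Iio v) (fun t => ENNReal.ofReal (t ^ (s/2-1) * G v)) t := by
          intro t
          simp only [Set.indicator_apply, Set.mem_Ioi, Set.mem_Iio]
        simp_rw [hswap_ind]
        rw [lintegral_indicator measurableSet_Iio, Measure.restrict_restrict measurableSet_Iio,
          Set.Iio_inter_Ioi]
        have hpt : ∀ t ∈ Set.Ioo (0:ℝ) v, ENNReal.ofReal (t ^ (s/2-1) * G v)
            = ENNReal.ofReal (t ^ (s/2-1)) * ENNReal.ofReal (G v) := fun t ht =>
          ENNReal.ofReal_mul (Real.rpow_nonneg ht.1.le _)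
        rw [setLIntegral_congr_fun measurableSet_Ioo hpt,
          lintegral_mul_const' _ _ ENNReal.ofReal_ne_top, rpow_lint s hs0 hv']
    _ = ENNReal.ofReal B2 * (ENNReal.ofReal (2/s) * ∫⁻ v in Set.Ioi (0:ℝ),
          ENNReal.ofReal (v ^ (s/2-1) * ‖T (v/2) x‖)) := by
        congr 1
        rw [← lintegral_const_mul' _ _ ENNReal.ofReal_ne_top]
        refine setLIntegral_congr_fun measurableSet_Ioi
          (fun v hv => ?_)
        have hv' : (0:ℝ) < v := Set.mem_Ioi.mp hv
        rw [← ENNReal.ofReal_mul (by positivity),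
          ← ENNReal.ofReal_mul (by positivity : (0:ℝ) ≤ 2/s)]
        congr 1
        simp only [hGdef]
        rw [Real.rpow_sub_one (ne_of_gt hv')]
        field_simp
    _ = ENNReal.ofReal B2 * (ENNReal.ofReal (2/s) *
          (2 * (ENNReal.ofReal ((2:ℝ) ^ (s/2-1)) * BnegNorm T s x))) := by
        congr 2
        rw [scale_lint (fun v => ENNReal.ofReal (v ^ (s/2-1) * ‖T (v/2) x‖))]
        congr 1
        simp only [BnegNorm]
        rw [← lintegral_const_mul' _ _ ENNReal.ofReal_ne_top]
        refine setLIntegral_congr_fun measurableSet_Ioi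
          (fun u hu => ?_)
        have hu' : (0:ℝ) < u := Set.mem_Ioi.mp hu
        rw [show (2*u)/2 = u by ring, Real.mul_rpow (by norm_num) hu'.le, mul_assoc,
          ENNReal.ofReal_mul (by positivity)]
    _ ≤ ↑Cr.toNNReal * BnegNorm T s x := by
        refine le_of_eq ?_
        have hc : (↑Cr.toNNReal : ℝ≥0∞) = ENNReal.ofReal Cr := rfl
        rw [hc, hCrdef, ENNReal.ofReal_mul hB20,
          ENNReal.ofReal_mul (by positivity : (0:ℝ) ≤ 2/s),
          ENNReal.ofReal_mul (by norm_num : (0:ℝ) ≤ 2), ENNReal.ofReal_ofNat]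
        ring

end BAStest


/-- Integrated smoothing bound in `Ḃ⁻ˢ`: for every `k ≥ 0` and `s ∈ (0,2)` there is
`C = C(s,k,M,C₀)` with
`∫₀^∞ ‖τ^{k+1}S^{k+1}(T(τ)x)‖_{Ḃ⁻ˢ} dτ/τ ≤ C‖x‖_{Ḃ⁻ˢ}` for every `x` in the range
of `S`; in particular (`k = 0`) `∫₀^∞ ‖S(T(τ)x)‖_{Ḃ⁻ˢ} dτ ≤ C‖x‖_{Ḃ⁻ˢ}`. -/
theorem global_in_time_bound_in_Bneg (k : ℕ) (s : ℝ) (hs0 : 0 < s) (hs2 : s < 2)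
    (M C₀ : ℝ) :
    ∃ C : ℝ≥0, ∀ (D : Set X) (S : X → X) (T : ℝ → X →L[ℝ] X),
      IsBAS D S T M C₀ → ∀ x ∈ S '' D,
      (∫⁻ τ in Set.Ioi (0 : ℝ),
          BnegNorm T s (τ ^ (k + 1) • S^[k + 1] (T τ x)) * ENNReal.ofReal τ⁻¹)
        ≤ C * BnegNorm T s x ∧
      (∫⁻ τ in Set.Ioi (0 : ℝ), BnegNorm T s (S (T τ x)))
        ≤ C * BnegNorm T s x := by
  obtain ⟨C1, hC1⟩ := BAStest.key (X := X) k s hs0 hs2 M C₀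
  obtain ⟨C2, hC2⟩ := BAStest.key (X := X) 0 s hs0 hs2 M C₀
  refine ⟨C1 + C2, fun D S T hT x _ => ?_⟩
  constructor
  · exact le_trans (hC1 D S T hT x)
      (mul_le_mul_left (ENNReal.coe_le_coe.mpr le_self_add) _)
  · have heq : (∫⁻ τ in Set.Ioi (0:ℝ), BnegNorm T s (S (T τ x)))
        = ∫⁻ τ in Set.Ioi (0:ℝ),
            BnegNorm T s (τ ^ (0+1) • S^[0+1] (T τ x)) * ENNReal.ofReal τ⁻¹ := by
      refine setLIntegral_congr_fun measurableSet_Ioi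
        (fun τ hτ => ?_)
      have hτ' : (0:ℝ) < τ := Set.mem_Ioi.mp hτ
      have h0 : τ ^ (0+1) • S^[0+1] (T τ x) = τ • S (T τ x) := by
        simp
      rw [h0]
      have hsm : BnegNorm T s (τ • S (T τ x))
          = ENNReal.ofReal τ * BnegNorm T s (S (T τ x)) := by
        simp only [BnegNorm]
        rw [← lintegral_const_mul' _ _ ENNReal.ofReal_ne_top]
        refine setLIntegral_congr_fun measurableSet_Ioi
          (fun t ht => ?_)
        rw [_root_.map_smul, norm_smul, Real.norm_eq_abs, abs_of_pos hτ',
          ← ENNReal.ofReal_mul hτ'.le]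
        congr 1
        ring
      rw [hsm]
      have h1 : ENNReal.ofReal τ * ENNReal.ofReal τ⁻¹ = 1 := by
        rw [← ENNReal.ofReal_mul hτ'.le, mul_inv_cancel₀ (ne_of_gt hτ'), ENNReal.ofReal_one]
      calc BnegNorm T s (S (T τ x))
          = (ENNReal.ofReal τ * ENNReal.ofReal τ⁻¹) * BnegNorm T s (S (T τ x)) := by
            rw [h1, one_mul]
        _ = ENNReal.ofReal τ * BnegNorm T s (S (T τ x)) * ENNReal.ofReal τ⁻¹ := by
            ring
    rw [heq]
    exact le_trans (hC2 D S T hT x)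
      (mul_le_mul_left (ENNReal.coe_le_coe.mpr le_add_self) _)
end
end

section
/- Let (X,‖·‖) be a real Banach space and let S, with domain D(S) ⊆ X, generate a bounded analytic semigroup (T(t))_{t≥0} with constants M, C₀ as in the context, and let s ∈ (0,2) and T₀ ∈ (0,∞]. Then there exists a constant C = C(s,M,C₀) such that for every strongly measurable f : (0,T₀) → X with f(τ) ∈ D(S) for a.e. τ and ∫₀^{T₀} ‖f(τ)‖_{Ḃˢ} dτ < ∞, one has (a) ∫₀^{T₀} ∫₀^{t} ‖S(T(t−τ)f(τ))‖_{Ḃˢ} dτ dt ≤ C ∫₀^{T₀} ‖f(τ)‖_{Ḃˢ} dτ, and (b) for every t ∈ (0,T₀): ∫₀^{t} ‖T(t−τ)f(τ)‖_{Ḃˢ} dτ ≤ C ∫₀^{T₀} ‖f(τ)‖_{Ḃˢ} dτ. -/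
open MeasureTheory
open scoped ENNReal NNReal

noncomputable section

variable {X : Type*} [NormedAddCommGroup X] [NormedSpace ℝ X] [CompleteSpace X]

/-! ### Auxiliary measure-theoretic lemmas -/

section MeasureAux

lemma lintegral_Ioi_shift (G : ℝ → ℝ≥0∞) (c : ℝ) :
    ∫⁻ σ in Set.Ioi (0:ℝ), G (σ + c) = ∫⁻ w in Set.Ioi c, G w := by
  rw [← lintegral_indicator measurableSet_Ioi, ← lintegral_indicator measurableSet_Ioi]
  have h1 : ∀ σ : ℝ, (Set.Ioi (0:ℝ)).indicator (fun σ => G (σ + c)) σ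
      = (Set.Ioi c).indicator G (σ + c) := by
    intro σ
    by_cases h : σ ∈ Set.Ioi (0:ℝ)
    · rw [Set.indicator_of_mem h, Set.indicator_of_mem (by simpa using h)]
    · rw [Set.indicator_of_notMem h, Set.indicator_of_notMem (by simpa using h)]
  simp_rw [h1]
  exact lintegral_add_right_eq_self ((Set.Ioi c).indicator G) c

lemma lintegral_two_mul (G : ℝ → ℝ≥0∞) (hG : Measurable G) :
    ∫⁻ w, G w = 2 * ∫⁻ v, G (2 * v) := by
  have h2 : (2:ℝ) ≠ 0 := two_ne_zero
  have hmap : ∫⁻ v, G (2 * v) = ENNReal.ofReal |(2:ℝ)⁻¹| * ∫⁻ w, G w := by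
    rw [← lintegral_map hG (measurable_const_mul 2), Real.map_volume_mul_left h2,
      lintegral_smul_measure, smul_eq_mul]
  rw [hmap, ← mul_assoc]
  have : (2:ℝ≥0∞) * ENNReal.ofReal |(2:ℝ)⁻¹| = 1 := by
    rw [abs_of_pos (by norm_num : (0:ℝ) < 2⁻¹),
      ENNReal.ofReal_inv_of_pos (by norm_num : (0:ℝ) < 2), ENNReal.ofReal_ofNat]
    exact ENNReal.mul_inv_cancel (by norm_num) (by norm_num)
  rw [this, one_mul]

lemma measurable_indicator_of_continuousOn {α : Type*} [TopologicalSpace α]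
    [MeasurableSpace α] [OpensMeasurableSpace α] {f : α → ℝ} {U : Set α}
    (hU : IsOpen U) (hf : ContinuousOn f U) :
    Measurable (U.indicator f) := by
  apply measurable_of_isOpen
  intro s hs
  by_cases h0 : (0:ℝ) ∈ s
  · have : U.indicator f ⁻¹' s = (U ∩ f ⁻¹' s) ∪ Uᶜ := by
      ext x; by_cases hx : x ∈ U <;> simp [Set.indicator, hx, h0]
    rw [this]
    exact ((hf.isOpen_inter_preimage hU hs).measurableSet).union hU.measurableSet.compl
  · have : U.indicator f ⁻¹' s = U ∩ f ⁻¹' s := by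
      ext x; by_cases hx : x ∈ U <;> simp [Set.indicator, hx, h0]
    rw [this]
    exact (hf.isOpen_inter_preimage hU hs).measurableSet

lemma lintegral_rpow_Ioo {c : ℝ} (hc : -1 < c) {w : ℝ} (hw : 0 < w) :
    ∫⁻ r in Set.Ioo (0:ℝ) w, ENNReal.ofReal (r ^ c) = ENNReal.ofReal (w ^ (c+1) / (c+1)) := by
  have hint : IntervalIntegrable (fun r : ℝ => r ^ c) volume 0 w :=
    intervalIntegral.intervalIntegrable_rpow' hc
  have hIoc : IntegrableOn (fun r : ℝ => r ^ c) (Set.Ioc 0 w) volume := by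
    rw [← intervalIntegrable_iff_integrableOn_Ioc_of_le hw.le]; exact hint
  rw [Measure.restrict_congr_set Ioo_ae_eq_Ioc]
  rw [← ofReal_integral_eq_lintegral_ofReal hIoc ?nn]
  case nn =>
    filter_upwards [ae_restrict_mem measurableSet_Ioc] with r hr
    exact Real.rpow_nonneg hr.1.le _
  rw [← intervalIntegral.integral_of_le hw.le, integral_rpow (Or.inl hc)]
  rw [Real.zero_rpow (by linarith), sub_zero]

end MeasureAux

/-! ### Auxiliary semigroup lemmas -/

namespace IsBAS

set_option linter.unusedSectionVars false

variable {D : Set X} {S : X → X} {T : ℝ → X →L[ℝ] X} {M C₀ : ℝ}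

lemma apply_comp (hT : IsBAS D S T M C₀) {a b : ℝ} (ha : 0 ≤ a) (hb : 0 ≤ b) (x : X) :
    T a (T b x) = T (a + b) x := by rw [hT.T_semigroup a ha b hb]; rfl

lemma normS_T_le (hT : IsBAS D S T M C₀) (x : X) {σ r : ℝ} (hσ : 0 ≤ σ) (hr : 0 < r) :
    ‖S (T r (T σ x))‖ ≤ max M 0 * ‖S (T r x)‖ := by
  have h1 : T r (T σ x) = T σ (T r x) := by
    rw [hT.apply_comp hr.le hσ, hT.apply_comp hσ hr.le, add_comm]
  rw [h1, hT.T_comm _ (hT.analytic_mem x r hr) σ hσ]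
  calc ‖T σ (S (T r x))‖ ≤ M * ‖S (T r x)‖ := hT.T_bdd σ hσ _
    _ ≤ max M 0 * ‖S (T r x)‖ :=
      mul_le_mul_of_nonneg_right (le_max_left _ _) (norm_nonneg _)

lemma normSS_le (hT : IsBAS D S T M C₀) {x : X} (hx : x ∈ D) {σ r : ℝ}
    (hσ : 0 < σ) (hr : 0 < r) :
    ‖S (T r (S (T σ x)))‖ ≤ 2 * max C₀ 0 / (r + σ) * ‖S (T ((r + σ) / 2) x)‖ := by
  have hu : 0 < r + σ := by linarith
  have hu2 : 0 < (r + σ) / 2 := by linarith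
  have l1 : T r (S (T σ x)) = T (r + σ) (S x) := by
    rw [hT.T_comm x hx σ hσ.le, hT.apply_comp hr.le hσ.le]
  have l2 : T ((r + σ) / 2) (S (T ((r + σ) / 2) x)) = T (r + σ) (S x) := by
    rw [hT.T_comm x hx _ hu2.le, hT.apply_comp hu2.le hu2.le]
    have : (r + σ) / 2 + (r + σ) / 2 = r + σ := by ring
    rw [this]
  rw [l1, ← l2]
  set z := S (T ((r + σ) / 2) x) with hz
  have h2 := hT.analytic_bdd z ((r + σ) / 2) hu2
  have key : ‖S (T ((r + σ) / 2) z)‖ * ((r + σ) / 2) ≤ max C₀ 0 * ‖z‖ :=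
    le_trans (by linarith) (mul_le_mul_of_nonneg_right (le_max_left _ _) (norm_nonneg z))
  rw [div_mul_eq_mul_div, le_div_iff₀ hu]
  nlinarith [key]

lemma bsNorm_T_le (hT : IsBAS D S T M C₀) {s : ℝ} (x : X) {σ : ℝ} (hσ : 0 ≤ σ) :
    BsNorm S T s (T σ x) ≤ ENNReal.ofReal (max M 0) * BsNorm S T s x := by
  rw [BsNorm, BsNorm, ← lintegral_const_mul' _ _ ENNReal.ofReal_ne_top]
  refine lintegral_mono_ae ?_
  filter_upwards [ae_restrict_mem measurableSet_Ioi] with r hr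
  have h := hT.normS_T_le x hσ hr
  calc ENNReal.ofReal (r ^ (-s / 2) * ‖S (T r (T σ x))‖)
      ≤ ENNReal.ofReal (r ^ (-s / 2) * (max M 0 * ‖S (T r x)‖)) :=
        ENNReal.ofReal_le_ofReal
          (mul_le_mul_of_nonneg_left h (Real.rpow_nonneg (le_of_lt hr) _))
    _ = ENNReal.ofReal (max M 0) * ENNReal.ofReal (r ^ (-s / 2) * ‖S (T r x)‖) := by
        rw [← ENNReal.ofReal_mul (le_max_right M 0)]; congr 1; ring

lemma T_jointCont (hT : IsBAS D S T M C₀) :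
    ContinuousOn (fun p : ℝ × X => T p.1 p.2) (Set.Ici 0 ×ˢ Set.univ) := by
  rintro ⟨w₀, z₀⟩ ⟨hw₀, -⟩
  have h1 : ContinuousWithinAt (fun p : ℝ × X => T p.1 z₀)
      (Set.Ici 0 ×ˢ Set.univ) (w₀, z₀) := by
    refine ContinuousWithinAt.comp (f := Prod.fst) (x := (w₀, z₀)) ((hT.T_cont z₀) w₀ hw₀)
      continuousWithinAt_fst ?_
    rintro ⟨w, z⟩ ⟨hw, -⟩; exact hw
  have h2 : Filter.Tendsto (fun p : ℝ × X => T p.1 (p.2 - z₀))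
      (nhdsWithin (w₀, z₀) (Set.Ici 0 ×ˢ Set.univ)) (nhds 0) := by
    apply squeeze_zero_norm'
    · filter_upwards [self_mem_nhdsWithin] with p hp
      calc ‖T p.1 (p.2 - z₀)‖ ≤ M * ‖p.2 - z₀‖ := hT.T_bdd p.1 hp.1 _
        _ ≤ max M 0 * ‖p.2 - z₀‖ :=
          mul_le_mul_of_nonneg_right (le_max_left _ _) (norm_nonneg _)
    · have hcont : Continuous (fun p : ℝ × X => max M 0 * ‖p.2 - z₀‖) :=
        continuous_const.mul ((continuous_snd.sub continuous_const).norm)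
      have := hcont.tendsto (w₀, z₀)
      simp only [sub_self, norm_zero, mul_zero] at this
      exact this.mono_left nhdsWithin_le_nhds
  have key : ∀ p : ℝ × X, T p.1 p.2 = T p.1 z₀ + T p.1 (p.2 - z₀) := by
    intro p
    rw [← _root_.map_add (T p.1)]
    congr 1; abel
  have h1' : Filter.Tendsto (fun p : ℝ × X => T p.1 z₀)
      (nhdsWithin (w₀, z₀) (Set.Ici 0 ×ˢ Set.univ)) (nhds (T w₀ z₀)) := h1
  have hsum := h1'.add h2
  have hfun : (fun p : ℝ × X => T p.1 p.2)
      = fun p : ℝ × X => T p.1 z₀ + T p.1 (p.2 - z₀) := funext key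
  show Filter.Tendsto _ _ _
  rw [hfun]
  simpa using hsum

lemma SlinCont (hT : IsBAS D S T M C₀) {ε : ℝ} (hε : 0 < ε) :
    Continuous (fun y : X => S (T ε y)) := by
  let L : X →ₗ[ℝ] X :=
    { toFun := fun y => S (T ε y)
      map_add' := fun y y' => by
        show S (T ε (y + y')) = S (T ε y) + S (T ε y')
        rw [_root_.map_add (T ε)]
        exact hT.map_add _ (hT.analytic_mem y ε hε) _ (hT.analytic_mem y' ε hε)
      map_smul' := fun c y => by
        show S (T ε (c • y)) = c • S (T ε y)
        rw [_root_.map_smul (T ε)]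
        exact hT.map_smul c _ (hT.analytic_mem y ε hε) }
  have : ∀ y : X, ‖L y‖ ≤ (C₀ / ε) * ‖y‖ := by
    intro y
    have := hT.analytic_bdd y ε hε
    have h' : ‖S (T ε y)‖ ≤ C₀ * ‖y‖ / ε := by
      rw [le_div_iff₀ hε]; linarith
    simpa [L, div_mul_eq_mul_div] using h'
  exact (L.mkContinuous _ this).continuous

lemma ST_contOn (hT : IsBAS D S T M C₀) :
    ContinuousOn (fun p : ℝ × X => S (T p.1 p.2)) (Set.Ioi 0 ×ˢ Set.univ) := by
  rintro ⟨v₀, y₀⟩ ⟨hv₀, -⟩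
  simp only [Set.mem_Ioi] at hv₀
  set ε := v₀ / 2 with hεdef
  have hε : 0 < ε := by positivity
  set V : Set (ℝ × X) := Set.Ioi ε ×ˢ Set.univ with hVdef
  have hV_open : IsOpen V := isOpen_Ioi.prod isOpen_univ
  have hV_mem : V ∈ nhds (v₀, y₀) :=
    hV_open.mem_nhds ⟨by simp only [Set.mem_Ioi, hεdef]; linarith, Set.mem_univ _⟩
  have heq : ∀ p : ℝ × X, p ∈ V → S (T p.1 p.2) = T (p.1 - ε) (S (T ε p.2)) := by
    rintro ⟨v, y⟩ ⟨hv, -⟩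
    simp only [Set.mem_Ioi] at hv
    have h1 : T v y = T (v - ε) (T ε y) := by
      rw [hT.apply_comp (by linarith) hε.le, sub_add_cancel]
    rw [h1, hT.T_comm _ (hT.analytic_mem y ε hε) _ (by linarith)]
  have hG : ContinuousOn (fun p : ℝ × X => T (p.1 - ε) (S (T ε p.2))) V := by
    have hφ : ContinuousOn (fun p : ℝ × X => ((p.1 - ε), S (T ε p.2))) V :=
      ((continuous_fst.sub continuous_const).prodMk
        ((hT.SlinCont hε).comp continuous_snd)).continuousOn
    have hmaps : Set.MapsTo (fun p : ℝ × X => ((p.1 - ε), S (T ε p.2))) V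
        (Set.Ici 0 ×ˢ (Set.univ : Set X)) := by
      rintro ⟨v, y⟩ ⟨hv, -⟩
      exact ⟨by simp only [Set.mem_Ici]; simp only [Set.mem_Ioi] at hv; linarith,
        Set.mem_univ _⟩
    exact ContinuousOn.comp hT.T_jointCont hφ hmaps
  have hG_at : ContinuousAt (fun p : ℝ × X => T (p.1 - ε) (S (T ε p.2))) (v₀, y₀) :=
    hG.continuousAt hV_mem
  refine (hG_at.continuousWithinAt).congr_of_eventuallyEq ?_ ?_
  · filter_upwards [nhdsWithin_le_nhds hV_mem] with p hp
    exact heq p hp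
  · exact heq (v₀, y₀) (mem_of_mem_nhds hV_mem)

lemma psi_measurable [MeasurableSpace X] [BorelSpace X] (hT : IsBAS D S T M C₀) :
    Measurable (fun p : ℝ × X => if 0 < p.1 then ‖S (T p.1 p.2)‖ else 0) := by
  have hU : IsOpen (Set.Ioi (0:ℝ) ×ˢ (Set.univ : Set X)) := isOpen_Ioi.prod isOpen_univ
  have hcont : ContinuousOn (fun p : ℝ × X => ‖S (T p.1 p.2)‖)
      (Set.Ioi 0 ×ˢ Set.univ) := hT.ST_contOn.norm
  have h := measurable_indicator_of_continuousOn hU hcont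
  convert h using 1
  funext p
  by_cases hp : 0 < p.1 <;> simp [Set.indicator_apply, hp]

end IsBAS

set_option maxHeartbeats 2000000 in
/-- Maximal `L¹` regularity bound in `Ḃˢ` for the Duhamel (inhomogeneous) part:
for `s ∈ (0,2)` and `T₀ ∈ (0,∞]` there is `C = C(s,M,C₀)` such that for every
strongly measurable `f : (0,T₀) → X` taking values in `D(S)` a.e. with
`∫₀^{T₀}‖f(τ)‖_{Ḃˢ}dτ < ∞`:
`∫₀^{T₀}∫₀^t ‖S(T(t−τ)f(τ))‖_{Ḃˢ} dτ dt ≤ C∫₀^{T₀}‖f(τ)‖_{Ḃˢ}dτ` and, for every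
`t ∈ (0,T₀)`, `∫₀^t ‖T(t−τ)f(τ)‖_{Ḃˢ} dτ ≤ C∫₀^{T₀}‖f(τ)‖_{Ḃˢ}dτ`. -/
theorem maximal_L1_regularity_Bs (s : ℝ) (hs0 : 0 < s) (hs2 : s < 2) (M C₀ : ℝ) :
    ∃ C : ℝ≥0, ∀ T₀ : ℝ≥0∞, 0 < T₀ →
      ∀ (D : Set X) (S : X → X) (T : ℝ → X →L[ℝ] X), IsBAS D S T M C₀ →
      ∀ f : ℝ → X,
        AEStronglyMeasurable f
          (volume.restrict {τ : ℝ | 0 < τ ∧ ENNReal.ofReal τ < T₀}) →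
        (∀ᵐ τ ∂volume.restrict {τ : ℝ | 0 < τ ∧ ENNReal.ofReal τ < T₀}, f τ ∈ D) →
        (∫⁻ τ in {τ : ℝ | 0 < τ ∧ ENNReal.ofReal τ < T₀}, BsNorm S T s (f τ)) ≠ ⊤ →
        (∫⁻ t in {τ : ℝ | 0 < τ ∧ ENNReal.ofReal τ < T₀},
            ∫⁻ τ in Set.Ioo 0 t, BsNorm S T s (S (T (t - τ) (f τ))))
          ≤ C * ∫⁻ τ in {τ : ℝ | 0 < τ ∧ ENNReal.ofReal τ < T₀},
              BsNorm S T s (f τ) ∧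
        ∀ t : ℝ, 0 < t → ENNReal.ofReal t < T₀ →
          (∫⁻ τ in Set.Ioo 0 t, BsNorm S T s (T (t - τ) (f τ)))
            ≤ C * ∫⁻ τ in {τ : ℝ | 0 < τ ∧ ENNReal.ofReal τ < T₀},
                BsNorm S T s (f τ) := by
  classical
  have hs2' : 0 < 1 - s / 2 := by linarith
  set c₃ : ℝ := 2 * max C₀ 0 / (1 - s / 2) with hc₃
  set c₂ : ℝ := 2 * ((2:ℝ) ^ (-s / 2) * c₃) with hc₂
  have hc₃0 : 0 ≤ c₃ := by
    apply div_nonneg _ hs2'.le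
    have : (0:ℝ) ≤ max C₀ 0 := le_max_right _ _
    linarith
  have hc₂0 : 0 ≤ c₂ := by
    have : (0:ℝ) ≤ (2:ℝ) ^ (-s / 2) := Real.rpow_nonneg (by norm_num) _
    rw [hc₂]; positivity
  refine ⟨(max (max M 0) c₂).toNNReal, ?_⟩
  intro T₀ hT₀ D S T hT f hf_meas hf_mem _hfin
  letI : MeasurableSpace X := borel X
  haveI : BorelSpace X := ⟨rfl⟩
  set A := {τ : ℝ | 0 < τ ∧ ENNReal.ofReal τ < T₀} with hA_def
  have hA : MeasurableSet A := by
    have : A = Set.Ioi (0:ℝ) ∩ ENNReal.ofReal ⁻¹' Set.Iio T₀ := by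
      ext τ
      simp [hA_def, Set.mem_Ioi, Set.mem_preimage, Set.mem_Iio]
    rw [this]
    exact measurableSet_Ioi.inter (ENNReal.measurable_ofReal measurableSet_Iio)
  have hCcoe : (((max (max M 0) c₂).toNNReal : ℝ≥0) : ℝ≥0∞)
      = ENNReal.ofReal (max (max M 0) c₂) := rfl
  have hsub : ∀ {t : ℝ}, t ∈ A → Set.Ioo 0 t ⊆ A := by
    rintro t ⟨ht0, htT⟩ τ ⟨hτ0, hτt⟩
    exact ⟨hτ0, lt_of_le_of_lt (ENNReal.ofReal_le_ofReal hτt.le) htT⟩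
  constructor
  · -- part (a)
    set g := hf_meas.mk f with hg_def
    have hg : StronglyMeasurable g := hf_meas.stronglyMeasurable_mk
    have hfg : f =ᵐ[volume.restrict A] g := hf_meas.ae_eq_mk
    have hfDg : ∀ᵐ τ ∂(volume.restrict A), f τ ∈ D ∧ f τ = g τ := hf_mem.and hfg
    set ψ : ℝ → X → ℝ := fun v y => if 0 < v then ‖S (T v y)‖ else 0 with hψdef
    have hψ_meas : Measurable (fun p : ℝ × X => ψ p.1 p.2) := hT.psi_measurable
    have hψ_nonneg : ∀ (v : ℝ) (y : X), 0 ≤ ψ v y := by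
      intro v y
      simp only [hψdef]
      split
      · exact norm_nonneg _
      · exact le_rfl
    set H : ℝ → X → ℝ≥0∞ := fun σ y => ∫⁻ r in Set.Ioi (0:ℝ),
        ENNReal.ofReal (r ^ (-s / 2) * (2 * max C₀ 0 / (r + σ) * ψ ((r + σ) / 2) y))
      with hHdef
    have hW_meas : Measurable (fun p : (ℝ × X) × ℝ =>
        ENNReal.ofReal (p.2 ^ (-s / 2) *
          (2 * max C₀ 0 / (p.2 + p.1.1) * ψ ((p.2 + p.1.1) / 2) p.1.2))) := by
      apply Measurable.ennreal_ofReal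
      apply Measurable.mul
      · fun_prop
      · apply Measurable.mul
        · fun_prop
        · exact hψ_meas.comp
            (((measurable_snd.add (measurable_fst.comp measurable_fst)).div_const 2).prodMk
              (measurable_snd.comp measurable_fst))
    have hH_meas : Measurable (fun q : ℝ × X => H q.1 q.2) :=
      hW_meas.lintegral_prod_right'
    -- the key pointwise bound `BsNorm (S (T σ y)) ≤ H σ y`
    have hBH : ∀ y ∈ D, ∀ σ : ℝ, 0 < σ → BsNorm S T s (S (T σ y)) ≤ H σ y := by
      intro y hy σ hσ
      rw [BsNorm, hHdef]
      refine lintegral_mono_ae ?_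
      filter_upwards [ae_restrict_mem measurableSet_Ioi] with r hr
      simp only [Set.mem_Ioi] at hr
      have hψeq : ψ ((r + σ) / 2) y = ‖S (T ((r + σ) / 2) y)‖ := by
        simp only [hψdef]
        rw [if_pos (by linarith)]
      rw [hψeq]
      exact ENNReal.ofReal_le_ofReal
        (mul_le_mul_of_nonneg_left (hT.normSS_le hy hσ hr) (Real.rpow_nonneg hr.le _))
    -- the key integrated bound `∫ H σ y dσ ≤ c₂ BsNorm y`
    have hP : ∀ y : X, (∫⁻ σ in Set.Ioi (0:ℝ), H σ y)
        ≤ ENNReal.ofReal c₂ * BsNorm S T s y := by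
      intro y
      have hψy : Measurable (fun v : ℝ => ψ v y) :=
        hψ_meas.comp (measurable_id.prodMk measurable_const)
      have hQ_meas : Measurable (fun p : ℝ × ℝ =>
          ENNReal.ofReal (p.1 ^ (-s / 2) * (2 * max C₀ 0 / p.2 * ψ (p.2 / 2) y))) := by
        apply Measurable.ennreal_ofReal
        apply Measurable.mul
        · fun_prop
        · exact (measurable_const.div measurable_snd).mul
            (hψy.comp (measurable_snd.div_const 2))
      have hWy_meas : Measurable (fun p : ℝ × ℝ =>
          ENNReal.ofReal (p.2 ^ (-s / 2) *
            (2 * max C₀ 0 / (p.2 + p.1) * ψ ((p.2 + p.1) / 2) y))) := by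
        apply Measurable.ennreal_ofReal
        apply Measurable.mul
        · fun_prop
        · exact (measurable_const.div (measurable_snd.add measurable_fst)).mul
            (hψy.comp ((measurable_snd.add measurable_fst).div_const 2))
      calc (∫⁻ σ in Set.Ioi (0:ℝ), H σ y)
          = ∫⁻ r in Set.Ioi (0:ℝ), ∫⁻ σ in Set.Ioi (0:ℝ),
              ENNReal.ofReal (r ^ (-s / 2) *
                (2 * max C₀ 0 / (r + σ) * ψ ((r + σ) / 2) y)) := by
            simp only [hHdef]
            exact lintegral_lintegral_swap
              (f := fun σ r => ENNReal.ofReal (r ^ (-s / 2) *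
                (2 * max C₀ 0 / (r + σ) * ψ ((r + σ) / 2) y))) hWy_meas.aemeasurable
        _ = ∫⁻ r in Set.Ioi (0:ℝ), ∫⁻ w in Set.Ioi r,
              ENNReal.ofReal (r ^ (-s / 2) * (2 * max C₀ 0 / w * ψ (w / 2) y)) := by
            refine lintegral_congr fun r => ?_
            rw [← lintegral_Ioi_shift
              (fun w => ENNReal.ofReal (r ^ (-s / 2) * (2 * max C₀ 0 / w * ψ (w / 2) y))) r]
            refine lintegral_congr fun σ => ?_
            rw [add_comm σ r]
        _ = ∫⁻ r in Set.Ioi (0:ℝ), ∫⁻ w in Set.Ioi (0:ℝ),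
              (Set.Ioi r).indicator (fun w =>
                ENNReal.ofReal (r ^ (-s / 2) * (2 * max C₀ 0 / w * ψ (w / 2) y))) w := by
            refine setLIntegral_congr_fun measurableSet_Ioi (fun r hr => ?_)
            simp only [Set.mem_Ioi] at hr
            rw [lintegral_indicator measurableSet_Ioi,
              Measure.restrict_restrict measurableSet_Ioi,
              Set.inter_eq_left.mpr (Set.Ioi_subset_Ioi hr.le)]
        _ = ∫⁻ w in Set.Ioi (0:ℝ), ∫⁻ r in Set.Ioi (0:ℝ),
              (Set.Ioi r).indicator (fun w =>
                ENNReal.ofReal (r ^ (-s / 2) * (2 * max C₀ 0 / w * ψ (w / 2) y))) w := by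
            refine lintegral_lintegral_swap (f := fun r w =>
              (Set.Ioi r).indicator (fun w =>
                ENNReal.ofReal (r ^ (-s / 2) * (2 * max C₀ 0 / w * ψ (w / 2) y))) w) ?_
            have heq : (fun p : ℝ × ℝ => (Set.Ioi p.1).indicator (fun w =>
                ENNReal.ofReal (p.1 ^ (-s / 2) * (2 * max C₀ 0 / w * ψ (w / 2) y))) p.2)
                = fun p : ℝ × ℝ => if p.1 < p.2 then
                    ENNReal.ofReal (p.1 ^ (-s / 2) * (2 * max C₀ 0 / p.2 * ψ (p.2 / 2) y))
                  else 0 := by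
              funext p
              simp [Set.indicator_apply, Set.mem_Ioi]
            refine Measurable.aemeasurable ?_
            show Measurable (Function.uncurry fun r w => (Set.Ioi r).indicator _ w)
            have : Function.uncurry (fun r w => (Set.Ioi r).indicator (fun w =>
                ENNReal.ofReal (r ^ (-s / 2) * (2 * max C₀ 0 / w * ψ (w / 2) y))) w)
                = fun p : ℝ × ℝ => (Set.Ioi p.1).indicator (fun w =>
                ENNReal.ofReal (p.1 ^ (-s / 2) * (2 * max C₀ 0 / w * ψ (w / 2) y))) p.2 := rfl
            rw [this, heq]
            exact Measurable.ite (measurableSet_lt measurable_fst measurable_snd)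
              hQ_meas measurable_const
        _ = ∫⁻ w in Set.Ioi (0:ℝ),
              ENNReal.ofReal (c₃ * (w ^ (-s / 2) * ψ (w / 2) y)) := by
            refine setLIntegral_congr_fun measurableSet_Ioi (fun w hw => ?_)
            simp only [Set.mem_Ioi] at hw
            have hind : ∀ r : ℝ, (Set.Ioi r).indicator (fun w' =>
                ENNReal.ofReal (r ^ (-s / 2) * (2 * max C₀ 0 / w' * ψ (w' / 2) y))) w
                = (Set.Iio w).indicator (fun r =>
                    ENNReal.ofReal (r ^ (-s / 2) * (2 * max C₀ 0 / w * ψ (w / 2) y))) r := by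
              intro r
              by_cases h : r < w
              · rw [Set.indicator_of_mem (Set.mem_Ioi.mpr h),
                  Set.indicator_of_mem (Set.mem_Iio.mpr h)]
              · rw [Set.indicator_of_notMem (by simpa using h),
                  Set.indicator_of_notMem (by simpa using h)]
            simp_rw [hind]
            rw [lintegral_indicator measurableSet_Iio,
              Measure.restrict_restrict measurableSet_Iio]
            have hIset : Set.Iio w ∩ Set.Ioi (0:ℝ) = Set.Ioo 0 w := by
              rw [Set.inter_comm]; exact Set.Ioi_inter_Iio
            rw [hIset]
            have hcongr : ∫⁻ r in Set.Ioo (0:ℝ) w,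
                ENNReal.ofReal (r ^ (-s / 2) * (2 * max C₀ 0 / w * ψ (w / 2) y))
                = ∫⁻ r in Set.Ioo (0:ℝ) w, ENNReal.ofReal (r ^ (-s / 2))
                    * ENNReal.ofReal (2 * max C₀ 0 / w * ψ (w / 2) y) := by
              refine setLIntegral_congr_fun measurableSet_Ioo (fun r hr => ?_)
              rw [← ENNReal.ofReal_mul (Real.rpow_nonneg hr.1.le _)]
            rw [hcongr, lintegral_mul_const' _ _ ENNReal.ofReal_ne_top,
              lintegral_rpow_Ioo (by linarith) hw,
              ← ENNReal.ofReal_mul (div_nonneg (Real.rpow_nonneg hw.le _) (by linarith))]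
            congr 1
            have hwid : w ^ (-s / 2 + 1) = w ^ (-s / 2) * w := by
              rw [Real.rpow_add hw, Real.rpow_one]
            have hwne : w ≠ 0 := ne_of_gt hw
            have h2s : 1 - s / 2 ≠ 0 := ne_of_gt hs2'
            rw [hwid, hc₃]
            have hnum : w ^ (-s / 2) * w * (2 * max C₀ 0 / w * ψ (w / 2) y)
                = 2 * max C₀ 0 * (w ^ (-s / 2) * ψ (w / 2) y) := by
              field_simp
            rw [show (-s / 2 + 1) = 1 - s / 2 by ring, div_mul_eq_mul_div, hnum,
              div_mul_eq_mul_div]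
        _ ≤ ENNReal.ofReal c₂ * BsNorm S T s y := by
            refine le_of_eq ?_
            set R : ℝ → ℝ≥0∞ :=
              fun w => ENNReal.ofReal (c₃ * (w ^ (-s / 2) * ψ (w / 2) y)) with hRdef
            have hR_meas : Measurable R := by
              apply Measurable.ennreal_ofReal
              apply Measurable.const_mul
              exact (Measurable.mul (by fun_prop) (hψy.comp (measurable_id.div_const 2)))
            have hmeas : Measurable ((Set.Ioi (0:ℝ)).indicator R) :=
              hR_meas.indicator measurableSet_Ioi
            calc (∫⁻ w in Set.Ioi (0:ℝ), R w)
                = ∫⁻ w, (Set.Ioi (0:ℝ)).indicator R w :=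
                  (lintegral_indicator measurableSet_Ioi R).symm
              _ = 2 * ∫⁻ v, (Set.Ioi (0:ℝ)).indicator R (2 * v) :=
                  lintegral_two_mul _ hmeas
              _ = 2 * ∫⁻ v, (Set.Ioi (0:ℝ)).indicator (fun v => R (2 * v)) v := by
                  congr 1
                  refine lintegral_congr fun v => ?_
                  by_cases hv : v ∈ Set.Ioi (0:ℝ)
                  · rw [Set.indicator_of_mem hv, Set.indicator_of_mem]
                    simp only [Set.mem_Ioi] at hv ⊢
                    linarith
                  · rw [Set.indicator_of_notMem hv, Set.indicator_of_notMem]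
                    simp only [Set.mem_Ioi] at hv ⊢
                    intro h; exact hv (by linarith)
              _ = 2 * ∫⁻ v in Set.Ioi (0:ℝ), R (2 * v) := by
                  rw [lintegral_indicator measurableSet_Ioi]
              _ = 2 * ∫⁻ v in Set.Ioi (0:ℝ),
                    ENNReal.ofReal ((2:ℝ) ^ (-s / 2) * c₃)
                      * ENNReal.ofReal (v ^ (-s / 2) * ψ v y) := by
                  congr 1
                  refine setLIntegral_congr_fun measurableSet_Ioi
                    (fun v hv => ?_)
                  simp only [Set.mem_Ioi] at hv
                  have h2v : 2 * v / 2 = v := by ring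
                  have hrp : (2 * v) ^ (-s / 2)
                      = (2:ℝ) ^ (-s / 2) * v ^ (-s / 2) :=
                    Real.mul_rpow (by norm_num) hv.le
                  simp only [hRdef]
                  rw [h2v, hrp, ← ENNReal.ofReal_mul
                    (mul_nonneg (Real.rpow_nonneg (by norm_num) _) hc₃0)]
                  congr 1
                  ring
              _ = 2 * (ENNReal.ofReal ((2:ℝ) ^ (-s / 2) * c₃)
                    * ∫⁻ v in Set.Ioi (0:ℝ), ENNReal.ofReal (v ^ (-s / 2) * ψ v y)) := by
                  rw [lintegral_const_mul' _ _ ENNReal.ofReal_ne_top]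
              _ = ENNReal.ofReal c₂
                    * ∫⁻ v in Set.Ioi (0:ℝ), ENNReal.ofReal (v ^ (-s / 2) * ψ v y) := by
                  rw [← mul_assoc]
                  congr 1
                  rw [hc₂, ENNReal.ofReal_mul (by norm_num : (0:ℝ) ≤ 2),
                    ENNReal.ofReal_ofNat]
              _ = ENNReal.ofReal c₂ * BsNorm S T s y := by
                  congr 1
                  rw [BsNorm]
                  refine setLIntegral_congr_fun measurableSet_Ioi
                    (fun v hv => ?_)
                  simp only [Set.mem_Ioi] at hv
                  simp only [hψdef]
                  rw [if_pos hv]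
    -- assemble part (a)
    have hHg_meas : Measurable (fun p : ℝ × ℝ => H (p.1 - p.2) (g p.2)) :=
      hH_meas.comp ((measurable_fst.sub measurable_snd).prodMk
        (hg.measurable.comp measurable_snd))
    have hInd_meas : Measurable (fun p : ℝ × ℝ =>
        ({q : ℝ × ℝ | q.2 ∈ Set.Ioo 0 q.1}).indicator
          (fun q => H (q.1 - q.2) (g q.2)) p) := by
      refine Measurable.indicator hHg_meas ?_
      have : {q : ℝ × ℝ | q.2 ∈ Set.Ioo 0 q.1}
          = {q : ℝ × ℝ | 0 < q.2} ∩ {q : ℝ × ℝ | q.2 < q.1} := by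
        ext q; simp [Set.mem_Ioo, Set.mem_setOf_eq]
      rw [this]
      exact (measurableSet_lt measurable_const measurable_snd).inter
        (measurableSet_lt measurable_snd measurable_fst)
    calc (∫⁻ t in A, ∫⁻ τ in Set.Ioo 0 t, BsNorm S T s (S (T (t - τ) (f τ))))
        ≤ ∫⁻ t in A, ∫⁻ τ in Set.Ioo 0 t, H (t - τ) (g τ) := by
          refine lintegral_mono_ae ?_
          filter_upwards [ae_restrict_mem hA] with t ht
          refine lintegral_mono_ae ?_
          have hae' : ∀ᵐ τ ∂(volume.restrict (Set.Ioo 0 t)), f τ ∈ D ∧ f τ = g τ :=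
            hfDg.filter_mono (ae_mono (Measure.restrict_mono (hsub ht) le_rfl))
          filter_upwards [hae', ae_restrict_mem measurableSet_Ioo] with τ hτ hτmem
          rw [← hτ.2]
          exact hBH (f τ) hτ.1 (t - τ) (by linarith [hτmem.1, hτmem.2])
      _ = ∫⁻ t in A, ∫⁻ τ in A, ({q : ℝ × ℝ | q.2 ∈ Set.Ioo 0 q.1}).indicator
            (fun q => H (q.1 - q.2) (g q.2)) (t, τ) := by
          refine setLIntegral_congr_fun hA (fun t ht => ?_)
          have h1 : ∀ τ : ℝ, ({q : ℝ × ℝ | q.2 ∈ Set.Ioo 0 q.1}).indicator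
              (fun q => H (q.1 - q.2) (g q.2)) (t, τ)
              = (Set.Ioo 0 t).indicator (fun τ => H (t - τ) (g τ)) τ := by
            intro τ
            by_cases hm : τ ∈ Set.Ioo 0 t
            · rw [Set.indicator_of_mem hm, Set.indicator_of_mem (by exact hm)]
            · rw [Set.indicator_of_notMem hm, Set.indicator_of_notMem (by exact hm)]
          simp_rw [h1]
          rw [lintegral_indicator measurableSet_Ioo,
            Measure.restrict_restrict measurableSet_Ioo,
            Set.inter_eq_left.mpr (hsub ht)]
      _ = ∫⁻ τ in A, ∫⁻ t in A, ({q : ℝ × ℝ | q.2 ∈ Set.Ioo 0 q.1}).indicator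
            (fun q => H (q.1 - q.2) (g q.2)) (t, τ) :=
          lintegral_lintegral_swap (f := fun t τ =>
            ({q : ℝ × ℝ | q.2 ∈ Set.Ioo 0 q.1}).indicator
              (fun q => H (q.1 - q.2) (g q.2)) (t, τ)) hInd_meas.aemeasurable
      _ ≤ ∫⁻ τ in A, ENNReal.ofReal c₂ * BsNorm S T s (g τ) := by
          refine lintegral_mono fun τ => ?_
          calc (∫⁻ t in A, ({q : ℝ × ℝ | q.2 ∈ Set.Ioo 0 q.1}).indicator
                (fun q => H (q.1 - q.2) (g q.2)) (t, τ))
              ≤ ∫⁻ t, (Set.Ioi τ).indicator (fun t => H (t - τ) (g τ)) t := by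
                refine le_trans (lintegral_mono' Measure.restrict_le_self le_rfl)
                  (lintegral_mono fun t => ?_)
                by_cases hm : (t, τ) ∈ {q : ℝ × ℝ | q.2 ∈ Set.Ioo 0 q.1}
                · rw [Set.indicator_of_mem hm,
                    Set.indicator_of_mem (Set.mem_Ioi.mpr hm.2)]
                · rw [Set.indicator_of_notMem hm]
                  exact (zero_le : (0:ℝ≥0∞) ≤ _)
            _ = ∫⁻ t in Set.Ioi τ, H (t - τ) (g τ) :=
                lintegral_indicator measurableSet_Ioi _
            _ = ∫⁻ σ in Set.Ioi (0:ℝ), H σ (g τ) := by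
                rw [← lintegral_Ioi_shift (fun w => H (w - τ) (g τ)) τ]
                refine lintegral_congr fun σ => ?_
                rw [add_sub_cancel_right]
            _ ≤ ENNReal.ofReal c₂ * BsNorm S T s (g τ) := hP (g τ)
      _ = ENNReal.ofReal c₂ * ∫⁻ τ in A, BsNorm S T s (g τ) :=
          lintegral_const_mul' _ _ ENNReal.ofReal_ne_top
      _ = ENNReal.ofReal c₂ * ∫⁻ τ in A, BsNorm S T s (f τ) := by
          refine congrArg _ (lintegral_congr_ae (hfg.mono fun τ h => ?_))
          simp only []
          rw [← h]
      _ ≤ ((max (max M 0) c₂).toNNReal : ℝ≥0∞) * ∫⁻ τ in A, BsNorm S T s (f τ) := by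
          rw [hCcoe]
          exact mul_le_mul_left (ENNReal.ofReal_le_ofReal (le_max_right _ _)) _
  · -- part (b)
    intro t ht0 htT
    calc (∫⁻ τ in Set.Ioo 0 t, BsNorm S T s (T (t - τ) (f τ)))
        ≤ ∫⁻ τ in Set.Ioo 0 t, ENNReal.ofReal (max M 0) * BsNorm S T s (f τ) := by
          refine lintegral_mono_ae ?_
          filter_upwards [ae_restrict_mem measurableSet_Ioo] with τ hτ
          exact hT.bsNorm_T_le (f τ) (by linarith [hτ.2])
      _ = ENNReal.ofReal (max M 0) * ∫⁻ τ in Set.Ioo 0 t, BsNorm S T s (f τ) :=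
          lintegral_const_mul' _ _ ENNReal.ofReal_ne_top
      _ ≤ ENNReal.ofReal (max M 0) * ∫⁻ τ in A, BsNorm S T s (f τ) :=
          mul_le_mul_right
            (lintegral_mono' (Measure.restrict_mono (hsub ⟨ht0, htT⟩) le_rfl) le_rfl) _
      _ ≤ ((max (max M 0) c₂).toNNReal : ℝ≥0∞) * ∫⁻ τ in A, BsNorm S T s (f τ) := by
          rw [hCcoe]
          exact mul_le_mul_left (ENNReal.ofReal_le_ofReal (le_max_left _ _)) _
end
end

section
/- Let (X,‖·‖) be a real Banach space and let S, with domain D(S) ⊆ X, generate a bounded analytic semigroup (T(t))_{t≥0} with constants M, C₀ as in the context, and let s ∈ (0,2) and T₀ ∈ (0,∞]. Then there exists a constant C = C(s,M,C₀) such that for every strongly measurable f : (0,T₀) → X with f(τ) in the range of S for a.e. τ and ∫₀^{T₀} ‖f(τ)‖_{Ḃ⁻ˢ} dτ < ∞, one has (a) ∫₀^{T₀} ∫₀^{t} ‖S(T(t−τ)f(τ))‖_{Ḃ⁻ˢ} dτ dt ≤ C ∫₀^{T₀} ‖f(τ)‖_{Ḃ⁻ˢ} dτ (here T(t−τ)f(τ)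 ∈ D(S) for t > τ by analyticity), and (b) for every t ∈ (0,T₀): ∫₀^{t} ‖T(t−τ)f(τ)‖_{Ḃ⁻ˢ} dτ ≤ C ∫₀^{T₀} ‖f(τ)‖_{Ḃ⁻ˢ} dτ. -/
open MeasureTheory
open scoped ENNReal NNReal

noncomputable section

variable {X : Type*} [NormedAddCommGroup X] [NormedSpace ℝ X] [CompleteSpace X]

lemma measurable_rpow_const' (c : ℝ) : Measurable fun x : ℝ => x ^ c := by
  measurability

section Aux
variable {D : Set X} {S : X → X} {T : ℝ → X →L[ℝ] X} {M C₀ : ℝ}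

lemma IsBAS.T_add (hT : IsBAS D S T M C₀) {a b : ℝ} (ha : 0 ≤ a) (hb : 0 ≤ b) (x : X) :
    T (a + b) x = T a (T b x) := by
  rw [hT.T_semigroup a ha b hb]; rfl

lemma IsBAS.bneg_smul (hT : IsBAS D S T M C₀) (s : ℝ) (x : X) {σ : ℝ} (hσ : 0 ≤ σ) :
    BnegNorm T s (T σ x) ≤ ENNReal.ofReal (max M 0) * BnegNorm T s x := by
  rw [BnegNorm, BnegNorm, ← lintegral_const_mul' _ _ ENNReal.ofReal_ne_top]
  refine lintegral_mono_ae ((ae_restrict_iff' measurableSet_Ioi).2 (ae_of_all _ ?_))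
  intro r hr
  have hr0 : (0:ℝ) < r := hr
  have h1 : T r (T σ x) = T σ (T r x) := by
    rw [← hT.T_add hr0.le hσ, add_comm, hT.T_add hσ hr0.le]
  have h2 : ‖T r (T σ x)‖ ≤ max M 0 * ‖T r x‖ := by
    rw [h1]
    exact (hT.T_bdd σ hσ _).trans
      (mul_le_mul_of_nonneg_right (le_max_left _ _) (norm_nonneg _))
  rw [← ENNReal.ofReal_mul (le_max_right M 0)]
  apply ENNReal.ofReal_le_ofReal
  calc r ^ (s/2 - 1) * ‖T r (T σ x)‖
      ≤ r ^ (s/2 - 1) * (max M 0 * ‖T r x‖) :=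
        mul_le_mul_of_nonneg_left h2 (Real.rpow_nonneg hr0.le _)
    _ = max M 0 * (r ^ (s/2 - 1) * ‖T r x‖) := by ring

lemma IsBAS.jointCont (hT : IsBAS D S T M C₀) :
    Continuous (fun q : ℝ × X => T (max q.1 0) q.2) := by
  have key : ContinuousOn (fun q : ℝ × X => T q.1 q.2)
      (Set.Ici (0:ℝ) ×ˢ (Set.univ : Set X)) := by
    rintro ⟨a, x⟩ ⟨ha, -⟩
    have h1 : ContinuousWithinAt (fun q : ℝ × X => T q.1 x)
        (Set.Ici (0:ℝ) ×ˢ (Set.univ : Set X)) (a, x) :=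
      (hT.T_cont x a ha).comp (x := (a, x)) continuous_fst.continuousWithinAt
        fun q (hq : q ∈ Set.Ici (0:ℝ) ×ˢ (Set.univ : Set X)) => hq.1
    have h0 : Filter.Tendsto (fun q : ℝ × X => T q.1 (q.2 - x))
        (nhdsWithin (a, x) (Set.Ici (0:ℝ) ×ˢ (Set.univ : Set X))) (nhds 0) := by
      apply squeeze_zero_norm' (a := fun q : ℝ × X => max M 0 * ‖q.2 - x‖)
      · filter_upwards [self_mem_nhdsWithin] with q hq
        calc ‖T q.1 (q.2 - x)‖ ≤ M * ‖q.2 - x‖ := hT.T_bdd q.1 hq.1 _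
          _ ≤ max M 0 * ‖q.2 - x‖ :=
              mul_le_mul_of_nonneg_right (le_max_left _ _) (norm_nonneg _)
      · have h3 : Filter.Tendsto (fun q : ℝ × X => max M 0 * ‖q.2 - x‖)
            (nhds (a, x)) (nhds (max M 0 * ‖x - x‖)) :=
          (Filter.Tendsto.const_mul _ ((continuous_snd.sub continuous_const).norm.tendsto _))
        simpa using h3.mono_left nhdsWithin_le_nhds
    have hsum := h0.add h1
    simp only [zero_add] at hsum
    have heq : (fun q : ℝ × X => T q.1 (q.2 - x) + T q.1 x)
        = fun q : ℝ × X => T q.1 q.2 := by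
      funext q; simp [map_sub]
    rw [heq] at hsum
    exact hsum
  exact key.comp_continuous
    ((continuous_fst.max continuous_const).prodMk continuous_snd)
    fun q => ⟨show (0:ℝ) ≤ max q.1 0 from le_max_right _ _, Set.mem_univ _⟩

lemma kernel_integral {s : ℝ} (hs0 : 0 < s) (hs2 : s < 2) {σ : ℝ} (hσ : 0 < σ) :
    ∫⁻ r in Set.Ioi (0:ℝ), ENNReal.ofReal (r ^ (s/2 - 1) * (r + σ)⁻¹)
      ≤ ENNReal.ofReal ((2/s + 2/(2-s)) * σ ^ (s/2 - 1)) := by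
  have hp1 : (-1:ℝ) < s/2 - 1 := by linarith
  have hσp : 0 ≤ σ ^ (s/2-1) := Real.rpow_nonneg hσ.le _
  rw [← Set.Ioc_union_Ioi_eq_Ioi hσ.le,
    lintegral_union measurableSet_Ioi (Set.Ioc_disjoint_Ioi le_rfl)]
  have h1 : ∫⁻ r in Set.Ioc (0:ℝ) σ, ENNReal.ofReal (r ^ (s/2-1) * (r + σ)⁻¹)
      ≤ ENNReal.ofReal ((2/s) * σ ^ (s/2-1)) := by
    have hIcm : IntegrableOn (fun r : ℝ => σ⁻¹ * r ^ (s/2-1)) (Set.Ioc 0 σ) := by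
      apply Integrable.const_mul
      have := intervalIntegral.intervalIntegrable_rpow' (a := 0) (b := σ) hp1
      rwa [intervalIntegrable_iff_integrableOn_Ioc_of_le hσ.le] at this
    calc ∫⁻ r in Set.Ioc (0:ℝ) σ, ENNReal.ofReal (r ^ (s/2-1) * (r + σ)⁻¹)
        ≤ ∫⁻ r in Set.Ioc (0:ℝ) σ, ENNReal.ofReal (σ⁻¹ * r ^ (s/2-1)) := by
          refine lintegral_mono_ae ((ae_restrict_iff' measurableSet_Ioc).2 (ae_of_all _ ?_))
          intro r hr
          apply ENNReal.ofReal_le_ofReal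
          rw [mul_comm (σ⁻¹)]
          exact mul_le_mul_of_nonneg_left
            (inv_anti₀ hσ (by linarith [hr.1])) (Real.rpow_nonneg hr.1.le _)
      _ = ENNReal.ofReal (∫ r in Set.Ioc (0:ℝ) σ, σ⁻¹ * r ^ (s/2-1)) := by
          rw [ofReal_integral_eq_lintegral_ofReal hIcm ?_]
          rw [Filter.EventuallyLE, ae_restrict_iff' measurableSet_Ioc]
          refine ae_of_all _ fun r hr => ?_
          simp only [Pi.zero_apply]
          exact mul_nonneg (inv_nonneg.2 hσ.le) (Real.rpow_nonneg hr.1.le _)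
      _ ≤ ENNReal.ofReal ((2/s) * σ ^ (s/2-1)) := by
          apply ENNReal.ofReal_le_ofReal
          rw [integral_const_mul, ← intervalIntegral.integral_of_le hσ.le,
            integral_rpow (Or.inl hp1)]
          have e0 : (0:ℝ) ^ (s/2 - 1 + 1) = 0 := by
            rw [Real.zero_rpow (by linarith)]
          rw [e0]
          have e1 : σ ^ (s/2-1) = σ ^ (s/2 - 1 + 1) / σ := by
            rw [Real.rpow_add hσ, Real.rpow_one]
            field_simp
          rw [e1, sub_zero]
          have hσ0 : σ ≠ 0 := hσ.ne'
          have hs0' : s ≠ 0 := hs0.ne'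
          have hd : s/2 - 1 + 1 ≠ 0 := by
            intro h; apply hs0'; linarith
          apply le_of_eq
          field_simp
          ring_nf
          simp [hs0']
  have h2 : ∫⁻ r in Set.Ioi σ, ENNReal.ofReal (r ^ (s/2-1) * (r + σ)⁻¹)
      ≤ ENNReal.ofReal ((2/(2-s)) * σ ^ (s/2-1)) := by
    have hlt : s/2 - 1 - 1 < (-1:ℝ) := by linarith
    calc ∫⁻ r in Set.Ioi σ, ENNReal.ofReal (r ^ (s/2-1) * (r + σ)⁻¹)
        ≤ ∫⁻ r in Set.Ioi σ, ENNReal.ofReal (r ^ (s/2-1-1)) := by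
          refine lintegral_mono_ae ((ae_restrict_iff' measurableSet_Ioi).2 (ae_of_all _ ?_))
          intro r hr
          have hr0 : (0:ℝ) < r := hσ.trans hr
          apply ENNReal.ofReal_le_ofReal
          have : r ^ (s/2-1-1) = r ^ (s/2-1) * r⁻¹ := by
            rw [Real.rpow_sub hr0, Real.rpow_one, div_eq_mul_inv]
          rw [this]
          exact mul_le_mul_of_nonneg_left
            (inv_anti₀ hr0 (by linarith)) (Real.rpow_nonneg hr0.le _)
      _ = ENNReal.ofReal (∫ r in Set.Ioi σ, r ^ (s/2-1-1)) := by
          rw [ofReal_integral_eq_lintegral_ofReal (integrableOn_Ioi_rpow_of_lt hlt hσ) ?_]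
          rw [Filter.EventuallyLE, ae_restrict_iff' measurableSet_Ioi]
          refine ae_of_all _ fun r hr => ?_
          simp only [Pi.zero_apply]
          exact Real.rpow_nonneg (hσ.trans hr).le _
      _ ≤ ENNReal.ofReal ((2/(2-s)) * σ ^ (s/2-1)) := by
          apply ENNReal.ofReal_le_ofReal
          rw [integral_Ioi_rpow_of_lt hlt hσ]
          apply le_of_eq
          have e : s/2 - 1 - 1 + 1 = s/2 - 1 := by ring
          rw [e]
          rw [show (s/2 - 1 : ℝ) = -((2-s)/2) by ring, neg_div, div_neg, neg_neg]
          have h2s : (2:ℝ) - s ≠ 0 := by linarith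
          field_simp
  calc _ ≤ ENNReal.ofReal ((2/s) * σ ^ (s/2-1)) + ENNReal.ofReal ((2/(2-s)) * σ ^ (s/2-1)) :=
        add_le_add h1 h2
    _ = ENNReal.ofReal ((2/s + 2/(2-s)) * σ ^ (s/2-1)) := by
        rw [← ENNReal.ofReal_add (mul_nonneg (div_nonneg two_pos.le hs0.le) hσp)
          (mul_nonneg (div_nonneg two_pos.le (by linarith)) hσp)]
        ring_nf


lemma IsBAS.bneg_S_bound (hT : IsBAS D S T M C₀) {s : ℝ} (hs0 : 0 < s) (hs2 : s < 2)
    (x : X) {σ : ℝ} (hσ : 0 < σ) :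
    BnegNorm T s (S (T σ x)) ≤
      ENNReal.ofReal (2 * max C₀ 0 * max M 0 * (2/s + 2/(2-s)))
        * ENNReal.ofReal (σ ^ (s/2 - 1) * ‖T (σ/2) x‖) := by
  set c : ℝ := 2 * max C₀ 0 * max M 0 with hc
  have hc0 : 0 ≤ c := by positivity
  have key : ∀ r : ℝ, 0 < r →
      ‖T r (S (T σ x))‖ ≤ c * ‖T (σ/2) x‖ * (r + σ)⁻¹ := by
    intro r hr
    have hu : 0 < (r + σ)/2 := by linarith
    have e1 : T r (S (T σ x)) = S (T r (T σ x)) :=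
      (hT.T_comm _ (hT.analytic_mem x σ hσ) r hr.le).symm
    have e2 : T r (T σ x) = T ((r+σ)/2) (T ((r+σ)/2) x) := by
      rw [← hT.T_add hr.le hσ.le, ← hT.T_add hu.le hu.le]
      have e : (r+σ)/2 + (r+σ)/2 = r + σ := by ring
      rw [e]
    have b1 := hT.analytic_bdd (T ((r+σ)/2) x) ((r+σ)/2) hu
    have b2 : ‖T ((r+σ)/2) x‖ ≤ max M 0 * ‖T (σ/2) x‖ := by
      have e3 : T ((r+σ)/2) x = T (r/2) (T (σ/2) x) := by
        rw [← hT.T_add (by linarith : (0:ℝ) ≤ r/2) (by linarith : (0:ℝ) ≤ σ/2)]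
        have e : r/2 + σ/2 = (r+σ)/2 := by ring
        rw [e]
      rw [e3]
      exact (hT.T_bdd (r/2) (by linarith) _).trans
        (mul_le_mul_of_nonneg_right (le_max_left _ _) (norm_nonneg _))
    have b3 : ‖S (T ((r+σ)/2) (T ((r+σ)/2) x))‖ ≤ C₀ * ‖T ((r+σ)/2) x‖ / ((r+σ)/2) :=
      (le_div_iff₀ hu).2 (by linarith [b1])
    rw [e1, e2]
    refine b3.trans ?_
    rw [div_le_iff₀ hu]
    have b4 : C₀ * ‖T ((r+σ)/2) x‖ ≤ max C₀ 0 * (max M 0 * ‖T (σ/2) x‖) := by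
      calc C₀ * ‖T ((r+σ)/2) x‖ ≤ max C₀ 0 * ‖T ((r+σ)/2) x‖ :=
            mul_le_mul_of_nonneg_right (le_max_left _ _) (norm_nonneg _)
        _ ≤ max C₀ 0 * (max M 0 * ‖T (σ/2) x‖) :=
            mul_le_mul_of_nonneg_left b2 (le_max_right _ _)
    refine b4.trans (le_of_eq ?_)
    have hrσ : r + σ ≠ 0 := by positivity
    field_simp
    ring
  have step1 : BnegNorm T s (S (T σ x)) ≤
      ENNReal.ofReal (c * ‖T (σ/2) x‖)
        * ∫⁻ r in Set.Ioi (0:ℝ), ENNReal.ofReal (r ^ (s/2 - 1) * (r + σ)⁻¹) := by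
    rw [BnegNorm, ← lintegral_const_mul' _ _ ENNReal.ofReal_ne_top]
    refine lintegral_mono_ae ((ae_restrict_iff' measurableSet_Ioi).2 (ae_of_all _ ?_))
    intro r hr
    have hr0 : (0:ℝ) < r := hr
    rw [← ENNReal.ofReal_mul (mul_nonneg hc0 (norm_nonneg _))]
    apply ENNReal.ofReal_le_ofReal
    calc r ^ (s/2 - 1) * ‖T r (S (T σ x))‖
        ≤ r ^ (s/2 - 1) * (c * ‖T (σ/2) x‖ * (r + σ)⁻¹) :=
          mul_le_mul_of_nonneg_left (key r hr0) (Real.rpow_nonneg hr0.le _)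
      _ = c * ‖T (σ/2) x‖ * (r ^ (s/2 - 1) * (r + σ)⁻¹) := by ring
  refine step1.trans ?_
  refine (mul_le_mul_right (kernel_integral hs0 hs2 hσ) _).trans (le_of_eq ?_)
  have hB0 : 0 ≤ 2/s + 2/(2-s) :=
    add_nonneg (div_nonneg two_pos.le hs0.le) (div_nonneg two_pos.le (by linarith))
  rw [← ENNReal.ofReal_mul (mul_nonneg hc0 (norm_nonneg _)),
    ← ENNReal.ofReal_mul (mul_nonneg hc0 hB0)]
  congr 1
  ring


end Aux

lemma lint_translate (τ : ℝ) (g : ℝ → ℝ≥0∞) :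
    ∫⁻ t in Set.Ioi τ, g (t - τ) = ∫⁻ σ in Set.Ioi (0:ℝ), g σ := by
  have emb : MeasurableEmbedding (fun x : ℝ => x + τ) :=
    (Homeomorph.addRight τ).measurableEmbedding
  have h1 : (volume : Measure ℝ).restrict (Set.Ioi τ)
      = Measure.map (fun x : ℝ => x + τ) (volume.restrict (Set.Ioi 0)) := by
    conv_lhs => rw [← (measurePreserving_add_right volume τ).map_eq]
    rw [Measure.restrict_map (measurable_add_const τ) measurableSet_Ioi]
    congr 1
    ext x
    simp
  rw [h1, emb.lintegral_map]
  apply lintegral_congr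
  intro σ
  simp

lemma lint_scale_s17 (g : ℝ → ℝ≥0∞) :
    ∫⁻ σ in Set.Ioi (0:ℝ), g σ = 2 * ∫⁻ u in Set.Ioi (0:ℝ), g (2 * u) := by
  have emb : MeasurableEmbedding (fun x : ℝ => 2 * x) :=
    (Homeomorph.mulLeft₀ (2:ℝ) two_ne_zero).measurableEmbedding
  have hpre : (fun x : ℝ => 2 * x) ⁻¹' (Set.Ioi 0) = Set.Ioi 0 := by
    ext x; simp
  have h1 : Measure.map (fun x : ℝ => 2 * x) ((volume : Measure ℝ).restrict (Set.Ioi 0))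
      = ENNReal.ofReal (2:ℝ)⁻¹ • (volume : Measure ℝ).restrict (Set.Ioi 0) := by
    conv_lhs => rw [← hpre]
    rw [← Measure.restrict_map (measurable_const_mul 2) measurableSet_Ioi,
      Real.map_volume_mul_left two_ne_zero, Measure.restrict_smul]
    norm_num [abs_of_pos]
  have h2 : ∫⁻ u in Set.Ioi (0:ℝ), g (2 * u)
      = ENNReal.ofReal (2:ℝ)⁻¹ * ∫⁻ σ in Set.Ioi (0:ℝ), g σ := by
    rw [← emb.lintegral_map, h1, lintegral_smul_measure, smul_eq_mul]
  rw [h2, ← mul_assoc]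
  have : (2 : ℝ≥0∞) * ENNReal.ofReal (2:ℝ)⁻¹ = 1 := by
    rw [← ENNReal.ofReal_ofNat, ← ENNReal.ofReal_mul (by norm_num)]
    norm_num
  rw [this, one_mul]


/-- Maximal `L¹` regularity bound in `Ḃ⁻ˢ` for the Duhamel (inhomogeneous) part:
for `s ∈ (0,2)` and `T₀ ∈ (0,∞]` there is `C = C(s,M,C₀)` such that for every
strongly measurable `f : (0,T₀) → X` taking values in the range of `S` a.e. with
`∫₀^{T₀}‖f(τ)‖_{Ḃ⁻ˢ}dτ < ∞`:
`∫₀^{T₀}∫₀^t ‖S(T(t−τ)f(τ))‖_{Ḃ⁻ˢ} dτ dt ≤ C∫₀^{T₀}‖f(τ)‖_{Ḃ⁻ˢ}dτ` and, for every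
`t ∈ (0,T₀)`, `∫₀^t ‖T(t−τ)f(τ)‖_{Ḃ⁻ˢ} dτ ≤ C∫₀^{T₀}‖f(τ)‖_{Ḃ⁻ˢ}dτ`. -/
theorem maximal_L1_regularity_Bneg (s : ℝ) (hs0 : 0 < s) (hs2 : s < 2) (M C₀ : ℝ) :
    ∃ C : ℝ≥0, ∀ T₀ : ℝ≥0∞, 0 < T₀ →
      ∀ (D : Set X) (S : X → X) (T : ℝ → X →L[ℝ] X), IsBAS D S T M C₀ →
      ∀ f : ℝ → X,
        AEStronglyMeasurable f
          (volume.restrict {τ : ℝ | 0 < τ ∧ ENNReal.ofReal τ < T₀}) →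
        (∀ᵐ τ ∂volume.restrict {τ : ℝ | 0 < τ ∧ ENNReal.ofReal τ < T₀},
          f τ ∈ S '' D) →
        (∫⁻ τ in {τ : ℝ | 0 < τ ∧ ENNReal.ofReal τ < T₀}, BnegNorm T s (f τ)) ≠ ⊤ →
        (∫⁻ t in {τ : ℝ | 0 < τ ∧ ENNReal.ofReal τ < T₀},
            ∫⁻ τ in Set.Ioo 0 t, BnegNorm T s (S (T (t - τ) (f τ))))
          ≤ C * ∫⁻ τ in {τ : ℝ | 0 < τ ∧ ENNReal.ofReal τ < T₀},
              BnegNorm T s (f τ) ∧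
        ∀ t : ℝ, 0 < t → ENNReal.ofReal t < T₀ →
          (∫⁻ τ in Set.Ioo 0 t, BnegNorm T s (T (t - τ) (f τ)))
            ≤ C * ∫⁻ τ in {τ : ℝ | 0 < τ ∧ ENNReal.ofReal τ < T₀},
                BnegNorm T s (f τ) := by

  classical
  borelize X
  have hB0 : 0 ≤ 2/s + 2/(2-s) :=
    add_nonneg (div_nonneg two_pos.le hs0.le) (div_nonneg two_pos.le (by linarith))
  set c₁ : ℝ := 2 * max C₀ 0 * max M 0 * (2/s + 2/(2-s)) with hc₁
  have hc₁0 : 0 ≤ c₁ := mul_nonneg (by positivity) hB0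
  set c₂ : ℝ := c₁ * 2 ^ (s/2) with hc₂
  have hc₂0 : 0 ≤ c₂ := mul_nonneg hc₁0 (Real.rpow_nonneg two_pos.le _)
  refine ⟨(max M 0).toNNReal + c₂.toNNReal, ?_⟩
  intro T₀ hT₀ D S T hT f hf hfrange hfin
  set A := {τ : ℝ | 0 < τ ∧ ENNReal.ofReal τ < T₀} with hAdef
  have hA : MeasurableSet A := by
    have hAeq : A = Set.Ioi 0 ∩ ENNReal.ofReal ⁻¹' (Set.Iio T₀) := by
      ext τ
      simp [hAdef, Set.mem_Ioi]
    rw [hAeq]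
    exact measurableSet_Ioi.inter (ENNReal.measurable_ofReal measurableSet_Iio)
  have hCcast : ((((max M 0).toNNReal + c₂.toNNReal : ℝ≥0)) : ℝ≥0∞)
      = ENNReal.ofReal (max M 0) + ENNReal.ofReal c₂ := by
    rw [ENNReal.coe_add]; rfl
  set I := ∫⁻ τ in A, BnegNorm T s (f τ) with hI
  -- Part (b)
  have partb : ∀ t : ℝ, 0 < t → ENNReal.ofReal t < T₀ →
      (∫⁻ τ in Set.Ioo 0 t, BnegNorm T s (T (t - τ) (f τ)))
        ≤ ENNReal.ofReal (max M 0) * I := by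
    intro t ht htT
    have hsub : Set.Ioo 0 t ⊆ A := fun τ hτ =>
      ⟨hτ.1, lt_of_le_of_lt (ENNReal.ofReal_le_ofReal hτ.2.le) htT⟩
    calc (∫⁻ τ in Set.Ioo 0 t, BnegNorm T s (T (t - τ) (f τ)))
        ≤ ∫⁻ τ in Set.Ioo 0 t, ENNReal.ofReal (max M 0) * BnegNorm T s (f τ) := by
          refine lintegral_mono_ae ((ae_restrict_iff' measurableSet_Ioo).2 (ae_of_all _ ?_))
          exact fun τ hτ => hT.bneg_smul s (f τ) (by linarith [hτ.2] : (0:ℝ) ≤ t - τ)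
      _ = ENNReal.ofReal (max M 0) * ∫⁻ τ in Set.Ioo 0 t, BnegNorm T s (f τ) :=
          lintegral_const_mul' _ _ ENNReal.ofReal_ne_top
      _ ≤ ENNReal.ofReal (max M 0) * I := mul_le_mul_right (lintegral_mono_set hsub) _
  -- measurable representative of f
  set g : ℝ → X := hf.mk f with hgdef
  have hgm : StronglyMeasurable g := hf.stronglyMeasurable_mk
  have hfg : ∀ᵐ τ ∂(volume : Measure ℝ), τ ∈ A → f τ = g τ :=
    (ae_restrict_iff' hA).1 hf.ae_eq_mk
  -- the kernel
  set V : ℝ × ℝ → ℝ≥0∞ := fun q =>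
    ENNReal.ofReal ((q.1 - q.2) ^ (s/2 - 1) * ‖T (max ((q.1 - q.2)/2) 0) (g q.2)‖) with hV
  set P : Set (ℝ × ℝ) := {q | 0 < q.2 ∧ q.2 < q.1} with hP
  have hPm : MeasurableSet P := by
    have h1 : MeasurableSet {q : ℝ × ℝ | 0 < q.2} :=
      measurableSet_lt measurable_const measurable_snd
    have h2 : MeasurableSet {q : ℝ × ℝ | q.2 < q.1} :=
      measurableSet_lt measurable_snd measurable_fst
    rw [hP, Set.setOf_and]
    exact h1.inter h2
  have hVm : Measurable V := by
    have hθ : Measurable (fun q : ℝ × ℝ => (((q.1 - q.2)/2 : ℝ), g q.2)) :=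
      ((measurable_fst.sub measurable_snd).div_const 2).prodMk
        (hgm.measurable.comp measurable_snd)
    have h1 : Measurable (fun q : ℝ × ℝ => T (max ((q.1 - q.2)/2) 0) (g q.2)) :=
      hT.jointCont.measurable.comp hθ
    have h2 : Measurable (fun q : ℝ × ℝ => (q.1 - q.2) ^ (s/2 - 1)) :=
      (measurable_rpow_const' (s/2 - 1)).comp (measurable_fst.sub measurable_snd)
    exact ENNReal.measurable_ofReal.comp (h2.mul h1.norm)
  -- Part (a)
  have step1 : (∫⁻ t in A, ∫⁻ τ in Set.Ioo 0 t, BnegNorm T s (S (T (t - τ) (f τ))))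
      ≤ ∫⁻ t in A, ∫⁻ τ, ENNReal.ofReal c₁ * P.indicator V (t, τ) := by
    refine lintegral_mono_ae ((ae_restrict_iff' hA).2 (ae_of_all _ fun t ht => ?_))
    have inner1 : (∫⁻ τ in Set.Ioo 0 t, BnegNorm T s (S (T (t - τ) (f τ))))
        ≤ ∫⁻ τ in Set.Ioo 0 t, ENNReal.ofReal c₁ * V (t, τ) := by
      refine lintegral_mono_ae ?_
      rw [ae_restrict_iff' measurableSet_Ioo]
      filter_upwards [hfg] with τ hτfg hτ
      have hτA : τ ∈ A := ⟨hτ.1, lt_of_le_of_lt (ENNReal.ofReal_le_ofReal hτ.2.le) ht.2⟩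
      have hσ : 0 < t - τ := by linarith [hτ.2]
      calc BnegNorm T s (S (T (t - τ) (f τ)))
          = BnegNorm T s (S (T (t - τ) (g τ))) := by rw [hτfg hτA]
        _ ≤ ENNReal.ofReal c₁
              * ENNReal.ofReal ((t - τ) ^ (s/2 - 1) * ‖T ((t - τ)/2) (g τ)‖) :=
            hT.bneg_S_bound hs0 hs2 _ hσ
        _ = ENNReal.ofReal c₁ * V (t, τ) := by
            rw [hV]
            simp only
            rw [max_eq_left (by linarith : (0:ℝ) ≤ (t - τ)/2)]
    refine inner1.trans (le_of_eq ?_)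
    rw [← lintegral_indicator measurableSet_Ioo]
    apply lintegral_congr
    intro τ
    by_cases hτ : τ ∈ Set.Ioo 0 t
    · have hτP : (t, τ) ∈ P := ⟨hτ.1, hτ.2⟩
      rw [Set.indicator_of_mem hτ, Set.indicator_of_mem hτP]
    · have hτP : (t, τ) ∉ P := fun hc => hτ ⟨hc.1, hc.2⟩
      rw [Set.indicator_of_notMem hτ, Set.indicator_of_notMem hτP, mul_zero]
  have step2 : (∫⁻ t in A, ∫⁻ τ, ENNReal.ofReal c₁ * P.indicator V (t, τ))
      = ENNReal.ofReal c₁ * ∫⁻ t in A, ∫⁻ τ, P.indicator V (t, τ) := by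
    rw [← lintegral_const_mul' _ _ ENNReal.ofReal_ne_top]
    apply lintegral_congr
    intro t
    rw [lintegral_const_mul' _ _ ENNReal.ofReal_ne_top]
  have swap : (∫⁻ t in A, ∫⁻ τ, P.indicator V (t, τ))
      = ∫⁻ τ, ∫⁻ t in A, P.indicator V (t, τ) :=
    lintegral_lintegral_swap (hVm.indicator hPm).aemeasurable
  have step4 : ∀ τ : ℝ, (∫⁻ t in A, P.indicator V (t, τ))
      ≤ A.indicator (fun τ => ENNReal.ofReal (2 ^ (s/2)) * BnegNorm T s (g τ)) τ := by
    intro τ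
    by_cases hτA : τ ∈ A
    · rw [Set.indicator_of_mem hτA]
      calc ∫⁻ t in A, P.indicator V (t, τ)
          ≤ ∫⁻ t in A, (Set.Ioi τ).indicator (fun t => V (t, τ)) t := by
            refine lintegral_mono fun t => ?_
            by_cases htP : (t, τ) ∈ P
            · have ht2 : t ∈ Set.Ioi τ := Set.mem_Ioi.mpr htP.2
              rw [Set.indicator_of_mem htP, Set.indicator_of_mem ht2]
            · rw [Set.indicator_of_notMem htP]
              exact bot_le
        _ ≤ ∫⁻ t, (Set.Ioi τ).indicator (fun t => V (t, τ)) t :=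
            setLIntegral_le_lintegral _ _
        _ = ∫⁻ t in Set.Ioi τ, V (t, τ) := lintegral_indicator measurableSet_Ioi _
        _ = ∫⁻ σ in Set.Ioi 0, V (σ + τ, τ) := by
            rw [← lint_translate τ (fun σ => V (σ + τ, τ))]
            apply lintegral_congr
            intro t
            rw [sub_add_cancel]
        _ = 2 * ∫⁻ u in Set.Ioi 0, V (2 * u + τ, τ) := lint_scale_s17 _
        _ = ENNReal.ofReal (2 ^ (s/2)) * BnegNorm T s (g τ) := by
            rw [BnegNorm, ← lintegral_const_mul' _ _ ENNReal.ofReal_ne_top,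
              ← lintegral_const_mul' (2:ℝ≥0∞) _ (by norm_num)]
            refine lintegral_congr_ae ((ae_restrict_iff' measurableSet_Ioi).2 (ae_of_all _ ?_))
            intro u hu
            have hu0 : (0:ℝ) < u := hu
            simp only [hV]
            rw [show 2 * u + τ - τ = 2 * u by ring,
              show 2 * u / 2 = u by ring, max_eq_left hu0.le,
              Real.mul_rpow two_pos.le hu0.le,
              show (2:ℝ≥0∞) = ENNReal.ofReal (2:ℝ) by norm_num,
              ← ENNReal.ofReal_mul (by norm_num : (0:ℝ) ≤ 2),
              ← ENNReal.ofReal_mul (Real.rpow_nonneg two_pos.le _)]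
            congr 1
            rw [show s/2 = (s/2 - 1) + 1 by ring, Real.rpow_add two_pos, Real.rpow_one]
            ring
    · rw [Set.indicator_of_notMem hτA]
      have hzero : ∀ᵐ t ∂(volume.restrict A), P.indicator V (t, τ) = 0 := by
        rw [ae_restrict_iff' hA]
        refine ae_of_all _ fun t ht => ?_
        apply Set.indicator_of_notMem
        intro hPq
        exact hτA ⟨hPq.1, lt_of_le_of_lt (ENNReal.ofReal_le_ofReal hPq.2.le) ht.2⟩
      exact le_of_eq ((lintegral_congr_ae hzero).trans lintegral_zero)
  have step5 : (∫⁻ τ, A.indicator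
        (fun τ => ENNReal.ofReal (2 ^ (s/2)) * BnegNorm T s (g τ)) τ)
      = ENNReal.ofReal (2 ^ (s/2)) * I := by
    rw [lintegral_indicator hA, lintegral_const_mul' _ _ ENNReal.ofReal_ne_top, hI]
    congr 1
    refine lintegral_congr_ae ?_
    rw [Filter.EventuallyEq, ae_restrict_iff' hA]
    filter_upwards [hfg] with τ h hA'
    rw [← h hA']
  have parta : (∫⁻ t in A, ∫⁻ τ in Set.Ioo 0 t, BnegNorm T s (S (T (t - τ) (f τ))))
      ≤ ENNReal.ofReal c₂ * I := by
    calc (∫⁻ t in A, ∫⁻ τ in Set.Ioo 0 t, BnegNorm T s (S (T (t - τ) (f τ))))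
        ≤ ∫⁻ t in A, ∫⁻ τ, ENNReal.ofReal c₁ * P.indicator V (t, τ) := step1
      _ = ENNReal.ofReal c₁ * ∫⁻ t in A, ∫⁻ τ, P.indicator V (t, τ) := step2
      _ = ENNReal.ofReal c₁ * ∫⁻ τ, ∫⁻ t in A, P.indicator V (t, τ) := by rw [swap]
      _ ≤ ENNReal.ofReal c₁ * ∫⁻ τ, A.indicator
            (fun τ => ENNReal.ofReal (2 ^ (s/2)) * BnegNorm T s (g τ)) τ :=
          mul_le_mul_right (lintegral_mono step4) _
      _ = ENNReal.ofReal c₁ * (ENNReal.ofReal (2 ^ (s/2)) * I) := by rw [step5]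
      _ = ENNReal.ofReal c₂ * I := by
          rw [← mul_assoc, ← ENNReal.ofReal_mul hc₁0]
  constructor
  · refine parta.trans ?_
    rw [hCcast]
    exact mul_le_mul_left le_add_self _
  · intro t ht htT
    refine (partb t ht htT).trans ?_
    rw [hCcast]
    exact mul_le_mul_left le_self_add _
end
end
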